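/- arXiv:1112.1351 — 3 statements merged into one kernel-verified Lean document; each statement's English description precedes it below -/
import Mathlib

section
/- For the beach model B_M with M > 2 (alphabet {−M,...,−1,1,...,M}, adjacent letters must have product ≥ −1), the independence entropy equals log M, and the only words ŵ of nonempty subsets with ŵ^∞ independently legal, score log M, and no repeated letter are the single-letter words {−M,...,−1} and {1,...,M}. -/
open Filter

/-- The alphabet `{−M,…,−1,1,…,M}` of the beach model, encoded as a sign together with a
magnitude in `{1,…,M}`. -/
def BeachAlph (M : ℕ) := Bool × Fin M

instance (M : ℕ) : Fintype (BeachAlph M) := instFintypeProd _ _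
instance (M : ℕ) : DecidableEq (BeachAlph M) := instDecidableEqProd

/-- The integer value of a letter of the beach alphabet. -/
def beachVal {M : ℕ} (a : BeachAlph M) : ℤ :=
  if a.1 then ((a.2 : ℕ) + 1 : ℤ) else -((a.2 : ℕ) + 1 : ℤ)

/-- The beach model: adjacent letters must have product `≥ −1`. -/
def Beach (M : ℕ) : Set (ℤ → BeachAlph M) :=
  {x | ∀ i : ℤ, -1 ≤ beachVal (x i) * beachVal (x (i + 1))}

/-- A string of nonempty subsets of the alphabet is independently legal if every
selection yields a word appearing in a point of the beach model. -/
def beachIndepLegal (M : ℕ) {n : ℕ} (A : Fin n → Finset (BeachAlph M)) : Prop :=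
  (∀ i, (A i).Nonempty) ∧ ∀ w : Fin n → BeachAlph M, (∀ i, w i ∈ A i) →
    ∃ x ∈ Beach M, ∃ m : ℤ, ∀ i : Fin n, x (m + (i : ℤ)) = w i

/-- The maximal independence score of independently legal strings of length `n`. -/
noncomputable def beachMaxScore (M : ℕ) (n : ℕ) : ℝ :=
  sSup {r : ℝ | ∃ A : Fin n → Finset (BeachAlph M), beachIndepLegal M A ∧
    r = ∑ i, Real.log ((A i).card)}

/-- The set `{1,…,M}` of positive letters. -/
def beachPos (M : ℕ) : Finset (BeachAlph M) := Finset.univ.filter (fun a => a.1 = true)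

/-- The set `{−M,…,−1}` of negative letters. -/
def beachNeg (M : ℕ) : Finset (BeachAlph M) := Finset.univ.filter (fun a => a.1 = false)
section BeachAux

variable {M : ℕ}

lemma beachVal_true {a : BeachAlph M} (h : a.1 = true) : beachVal a = ((a.2 : ℕ) : ℤ) + 1 := by
  simp [beachVal, h]

lemma beachVal_false {a : BeachAlph M} (h : a.1 = false) : beachVal a = -(((a.2 : ℕ) : ℤ) + 1) := by
  simp [beachVal, h]

/-- Compatibility of two sets of letters. -/
def BeachCompat (M : ℕ) (S T : Finset (BeachAlph M)) : Prop :=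
  ∀ a ∈ S, ∀ b ∈ T, -1 ≤ beachVal a * beachVal b

lemma beachCompat_symm {S T : Finset (BeachAlph M)} (h : BeachCompat M S T) :
    BeachCompat M T S := fun b hb a ha => by
  rw [mul_comm]; exact h a ha b hb

lemma beach_compat_opp {a b : BeachAlph M} (hne : a.1 ≠ b.1)
    (h : -1 ≤ beachVal a * beachVal b) : (a.2 : ℕ) = 0 ∧ (b.2 : ℕ) = 0 := by
  have hx : (0:ℤ) ≤ ((a.2 : ℕ) : ℤ) := Int.natCast_nonneg _
  have hy : (0:ℤ) ≤ ((b.2 : ℕ) : ℤ) := Int.natCast_nonneg _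
  have hgoal : ((a.2 : ℕ) : ℤ) = 0 ∧ ((b.2 : ℕ) : ℤ) = 0 := by
    cases ha : a.1 <;> cases hb : b.1
    · simp [ha, hb] at hne
    · rw [beachVal_false ha, beachVal_true hb] at h
      constructor <;> nlinarith [mul_nonneg hx hy]
    · rw [beachVal_true ha, beachVal_false hb] at h
      constructor <;> nlinarith [mul_nonneg hx hy]
    · simp [ha, hb] at hne
  exact ⟨by exact_mod_cast hgoal.1, by exact_mod_cast hgoal.2⟩

lemma beach_card_sign (b : Bool) :
    (Finset.univ.filter (fun a : BeachAlph M => a.1 = b)).card = M := by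
  have : (Finset.univ.filter (fun a : BeachAlph M => a.1 = b)) =
      Finset.univ.map ⟨fun k : Fin M => ((b, k) : BeachAlph M),
        fun x y hxy => by simpa [Prod.ext_iff] using hxy⟩ := by
    ext ⟨c, k⟩
    refine Finset.mem_filter.trans ((and_iff_right (Finset.mem_univ _)).trans
      (Iff.trans ?_ Finset.mem_map.symm))
    simp only [Finset.mem_univ, true_and,
      Function.Embedding.coeFn_mk]
    constructor
    · rintro rfl; exact ⟨k, rfl⟩
    · rintro ⟨j, hj⟩
      have : (b, j) = (c, k) := hj
      exact (Prod.ext_iff.mp this).1.symm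
  rw [this]; exact (Finset.card_map _).trans (by rw [Finset.card_univ, Fintype.card_fin])

lemma beachPos_card : (beachPos M).card = M := beach_card_sign true
lemma beachNeg_card : (beachNeg M).card = M := beach_card_sign false

lemma beach_card_univ : Fintype.card (BeachAlph M) = 2 * M := by
  show Fintype.card (Bool × Fin M) = 2 * M
  simp [Fintype.card_prod]

/-- Key case analysis: a set compatible with something is single-signed,
or tiny, or forces the other side to be a singleton. -/
lemma beach_cases {S T : Finset (BeachAlph M)} (hC : BeachCompat M S T) :
    (∀ a ∈ S, ∀ b ∈ S, a.1 = b.1) ∨ S.card ≤ 2 ∨ T.card ≤ 1 := by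
  by_cases hsame : ∀ a ∈ S, ∀ b ∈ S, a.1 = b.1
  · exact Or.inl hsame
  push_neg at hsame
  obtain ⟨p, hp, q, hq, hpq⟩ := hsame
  by_cases hmag : ∀ a ∈ S, (a.2 : ℕ) = 0
  · right; left
    have hsub : S ⊆ Finset.univ.filter (fun a : BeachAlph M => (a.2 : ℕ) = 0) := by
      intro a ha; simp [hmag a ha]
    refine le_trans (Finset.card_le_card hsub) ?_
    have : (Finset.univ.filter (fun a : BeachAlph M => (a.2 : ℕ) = 0)).card ≤
        Fintype.card Bool := by
      apply Finset.card_le_card_of_injOn (fun a => a.1)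
      · intro a _; exact Finset.mem_univ _
      · intro a ha b hb hab
        simp only [Finset.coe_filter, Set.mem_setOf_eq] at ha hb
        exact Prod.ext hab (Fin.val_injective (ha.2.trans hb.2.symm))
    simpa using this
  · right; right
    push_neg at hmag
    obtain ⟨a, haS, ha2⟩ := hmag
    -- get c ∈ S with c.1 ≠ a.1
    obtain ⟨c, hcS, hca⟩ : ∃ c ∈ S, c.1 ≠ a.1 := by
      by_cases hpa : p.1 = a.1
      · exact ⟨q, hq, fun h => hpq (hpa.trans h.symm)⟩
      · exact ⟨p, hp, hpa⟩
    rw [Finset.card_le_one]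
    have key : ∀ t ∈ T, t.1 = a.1 ∧ (t.2 : ℕ) = 0 := by
      intro t ht
      have hta : t.1 = a.1 := by
        by_contra hta
        exact ha2 (beach_compat_opp (fun h => hta h.symm) (hC a haS t ht)).1
      refine ⟨hta, ?_⟩
      have : c.1 ≠ t.1 := fun h => hca (h.trans hta)
      exact (beach_compat_opp this (hC c hcS t ht)).2
    intro t ht t' ht'
    obtain ⟨h1, h2⟩ := key t ht
    obtain ⟨h1', h2'⟩ := key t' ht'
    exact Prod.ext (h1.trans h1'.symm) (Fin.val_injective (h2.trans h2'.symm))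

end BeachAux
section BeachAux2

variable {M : ℕ}

lemma beach_single_sign_card {S : Finset (BeachAlph M)}
    (h : ∀ a ∈ S, ∀ b ∈ S, a.1 = b.1) : S.card ≤ M := by
  rcases S.eq_empty_or_nonempty with rfl | ⟨a0, ha0⟩
  · simp
  · have hsub : S ⊆ Finset.univ.filter (fun a : BeachAlph M => a.1 = a0.1) := by
      intro a ha; simp [h a ha a0 ha0]
    simpa [beach_card_sign] using Finset.card_le_card hsub

/-- Either both cards are at most `M`, or one of them is a singleton. -/
lemma beach_card_cases (hM : 2 < M) {S T : Finset (BeachAlph M)}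
    (hS : S.Nonempty) (hT : T.Nonempty) (hC : BeachCompat M S T) :
    (S.card ≤ M ∧ T.card ≤ M) ∨ S.card = 1 ∨ T.card = 1 := by
  have cS : S.card ≤ M ∨ T.card ≤ 1 := by
    rcases beach_cases hC with h | h | h
    · exact Or.inl (beach_single_sign_card h)
    · exact Or.inl (h.trans (by omega))
    · exact Or.inr h
  have cT : T.card ≤ M ∨ S.card ≤ 1 := by
    rcases beach_cases (beachCompat_symm hC) with h | h | h
    · exact Or.inl (beach_single_sign_card h)
    · exact Or.inl (h.trans (by omega))
    · exact Or.inr h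
  have hS1 : 1 ≤ S.card := Finset.Nonempty.card_pos hS
  have hT1 : 1 ≤ T.card := Finset.Nonempty.card_pos hT
  rcases cS with h1 | h1 <;> rcases cT with h2 | h2
  · exact Or.inl ⟨h1, h2⟩
  · exact Or.inr (Or.inl (by omega))
  · exact Or.inr (Or.inr (by omega))
  · exact Or.inr (Or.inl (by omega))

lemma beach_card_le_univ (S : Finset (BeachAlph M)) : S.card ≤ 2 * M := by
  simpa [beach_card_univ] using Finset.card_le_univ S

lemma beach_logM_pos (hM : 2 < M) : 0 < Real.log M :=
  Real.log_pos (by exact_mod_cast by omega : (1:ℝ) < M)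

lemma beach_log2M_lt (hM : 2 < M) : Real.log (2 * M : ℕ) < 2 * Real.log M := by
  have hM0 : (0:ℝ) < M := by exact_mod_cast by omega
  have h2M : ((2 * M : ℕ) : ℝ) = 2 * (M : ℝ) := by push_cast; ring
  rw [h2M, Real.log_mul (by norm_num) hM0.ne']
  have : Real.log 2 < Real.log M :=
    Real.log_lt_log (by norm_num) (by exact_mod_cast hM)
  linarith

lemma beach_log_card_le (hM : 2 < M) (S : Finset (BeachAlph M)) :
    Real.log S.card ≤ 2 * Real.log M := by
  rcases Nat.eq_zero_or_pos S.card with h | h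
  · simp [h]
    positivity
  · refine le_of_lt (lt_of_le_of_lt ?_ (beach_log2M_lt hM))
    apply Real.log_le_log (by exact_mod_cast h)
    exact_mod_cast beach_card_le_univ S

lemma beach_log_card_le_logM {S : Finset (BeachAlph M)} (h1 : 1 ≤ S.card)
    (h : S.card ≤ M) : Real.log S.card ≤ Real.log M := by
  apply Real.log_le_log (by exact_mod_cast h1)
  exact_mod_cast h

/-- The pair bound. -/
lemma beach_pair_le (hM : 2 < M) {S T : Finset (BeachAlph M)}
    (hS : S.Nonempty) (hT : T.Nonempty) (hC : BeachCompat M S T) :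
    Real.log S.card + Real.log T.card ≤ 2 * Real.log M := by
  have hS1 : 1 ≤ S.card := Finset.Nonempty.card_pos hS
  have hT1 : 1 ≤ T.card := Finset.Nonempty.card_pos hT
  rcases beach_card_cases hM hS hT hC with ⟨h1, h2⟩ | h | h
  · have := beach_log_card_le_logM hS1 h1
    have := beach_log_card_le_logM hT1 h2
    linarith
  · have := beach_log_card_le hM T
    simp only [h]
    simpa using this
  · have := beach_log_card_le hM S
    simp only [h]
    simpa using this

/-- Strict version used for the equality case. -/
lemma beach_pair_eq (hM : 2 < M) {S T : Finset (BeachAlph M)}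
    (hS : S.Nonempty) (hT : T.Nonempty) (hC : BeachCompat M S T)
    (heq : Real.log S.card + Real.log T.card = 2 * Real.log M) :
    S.card = M ∧ T.card = M := by
  have hS1 : 1 ≤ S.card := Finset.Nonempty.card_pos hS
  have hT1 : 1 ≤ T.card := Finset.Nonempty.card_pos hT
  have hstrict : ∀ U : Finset (BeachAlph M), 1 ≤ U.card →
      Real.log U.card < 2 * Real.log M := by
    intro U hU
    refine lt_of_le_of_lt ?_ (beach_log2M_lt hM)
    apply Real.log_le_log (by exact_mod_cast hU)
    exact_mod_cast beach_card_le_univ U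
  rcases beach_card_cases hM hS hT hC with ⟨h1, h2⟩ | h | h
  · have lS := beach_log_card_le_logM hS1 h1
    have lT := beach_log_card_le_logM hT1 h2
    have eS : Real.log S.card = Real.log M := by linarith
    have eT : Real.log T.card = Real.log M := by linarith
    constructor
    · by_contra hne
      have : S.card < M := lt_of_le_of_ne h1 hne
      exact absurd eS (ne_of_lt (Real.log_lt_log (by exact_mod_cast hS1) (by exact_mod_cast this)))
    · by_contra hne
      have : T.card < M := lt_of_le_of_ne h2 hne
      exact absurd eT (ne_of_lt (Real.log_lt_log (by exact_mod_cast hT1) (by exact_mod_cast this)))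
  · exfalso
    have := hstrict T hT1
    rw [h] at heq
    simp at heq
    linarith
  · exfalso
    have := hstrict S hS1
    rw [h] at heq
    simp at heq
    linarith

end BeachAux2
section BeachAux3

variable {M : ℕ}

lemma beach_single_sign_eq {S : Finset (BeachAlph M)} (hM : 2 < M)
    (hcard : S.card = M) (h : ∀ a ∈ S, ∀ b ∈ S, a.1 = b.1) :
    S = beachPos M ∨ S = beachNeg M := by
  have hne : S.Nonempty := Finset.card_pos.mp (by omega)
  obtain ⟨a0, ha0⟩ := hne
  have hsub : S ⊆ Finset.univ.filter (fun a : BeachAlph M => a.1 = a0.1) := by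
    intro a ha; simp [h a ha a0 ha0]
  have heq : S = Finset.univ.filter (fun a : BeachAlph M => a.1 = a0.1) :=
    Finset.eq_of_subset_of_card_le hsub (by rw [beach_card_sign, hcard])
  cases h0 : a0.1
  · right; rw [heq, h0]; rfl
  · left; rw [heq, h0]; rfl

/-- If two compatible nonempty sets both have cardinality `M`, they are both
`beachPos` or both `beachNeg`. -/
lemma beach_key2 (hM : 2 < M) {S T : Finset (BeachAlph M)}
    (hC : BeachCompat M S T) (hcS : S.card = M) (hcT : T.card = M) :
    (S = beachPos M ∧ T = beachPos M) ∨ (S = beachNeg M ∧ T = beachNeg M) := by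
  have hsignS : ∀ a ∈ S, ∀ b ∈ S, a.1 = b.1 := by
    rcases beach_cases hC with h | h | h
    · exact h
    · omega
    · omega
  have hsignT : ∀ a ∈ T, ∀ b ∈ T, a.1 = b.1 := by
    rcases beach_cases (beachCompat_symm hC) with h | h | h
    · exact h
    · omega
    · omega
  have hS := beach_single_sign_eq hM hcS hsignS
  have hT := beach_single_sign_eq hM hcT hsignT
  have h1M : 1 < M := by omega
  have h0M : 0 < M := by omega
  have hmemP : ((true, ⟨1, h1M⟩) : BeachAlph M) ∈ beachPos M := by
    exact Finset.mem_filter.mpr ⟨Finset.mem_univ _, rfl⟩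
  have hmemN : ((false, ⟨0, h0M⟩) : BeachAlph M) ∈ beachNeg M := by
    exact Finset.mem_filter.mpr ⟨Finset.mem_univ _, rfl⟩
  have hvP : beachVal ((true, ⟨1, h1M⟩) : BeachAlph M) = 2 := by
    simp [beachVal]
  have hvN : beachVal ((false, ⟨0, h0M⟩) : BeachAlph M) = -1 := by
    simp [beachVal]
  rcases hS with hS | hS <;> rcases hT with hT | hT
  · exact Or.inl ⟨hS, hT⟩
  · exfalso
    have := hC _ (hS ▸ hmemP) _ (hT ▸ hmemN)
    rw [hvP, hvN] at this
    norm_num at this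
  · exfalso
    have := hC _ (hS ▸ hmemN) _ (hT ▸ hmemP)
    rw [hvN, hvP] at this
    norm_num at this
  · exact Or.inr ⟨hS, hT⟩

end BeachAux3
section BeachAux4

variable {M : ℕ}

lemma beachVal_one_le {a : BeachAlph M} (h : a.1 = true) : 1 ≤ beachVal a := by
  rw [beachVal_true h]
  have : (0:ℤ) ≤ ((a.2 : ℕ) : ℤ) := Int.natCast_nonneg _
  linarith

/-- Every all-positive word occurs in the beach model. -/
lemma beach_pos_word (hM : 0 < M) {n : ℕ} (w : Fin n → BeachAlph M)
    (hw : ∀ i, (w i).1 = true) :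
    ∃ x ∈ Beach M, ∃ m : ℤ, ∀ i : Fin n, x (m + (i : ℤ)) = w i := by
  classical
  set x : ℤ → BeachAlph M := fun j =>
    if h : 0 ≤ j ∧ j.toNat < n then w ⟨j.toNat, h.2⟩ else (true, ⟨0, hM⟩) with hx
  have hxt : ∀ j, (x j).1 = true := by
    intro j
    by_cases h : 0 ≤ j ∧ j.toNat < n
    · rw [show x j = w ⟨j.toNat, h.2⟩ from dif_pos h]; exact hw _
    · rw [show x j = (true, ⟨0, hM⟩) from dif_neg h]
  refine ⟨x, ?_, 0, ?_⟩
  · intro i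
    have h1 := beachVal_one_le (hxt i)
    have h2 := beachVal_one_le (hxt (i+1))
    nlinarith
  · intro i
    have h0 : (0:ℤ) + (i : ℤ) = (i : ℤ) := by ring
    rw [h0]
    have hcond : (0:ℤ) ≤ (i : ℤ) ∧ ((i : ℤ)).toNat < n := by
      constructor
      · exact Int.natCast_nonneg _
      · simp [Int.toNat_natCast]
    rw [show x (i : ℤ) = w ⟨((i : ℕ) : ℤ).toNat, hcond.2⟩ from dif_pos hcond]
    congr 1

/-- Adjacent sets of an independently legal string are compatible. -/
lemma beach_legal_compat {n : ℕ} {A : Fin n → Finset (BeachAlph M)}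
    (hA : beachIndepLegal M A) (i j : Fin n) (hij : (j : ℤ) = (i : ℤ) + 1) :
    BeachCompat M (A i) (A j) := by
  classical
  intro a ha b hb
  have hij' : i ≠ j := by
    intro h; rw [h] at hij; omega
  set w : Fin n → BeachAlph M := fun k =>
    if k = i then a else if k = j then b else (hA.1 k).choose with hwdef
  have hw : ∀ k, w k ∈ A k := by
    intro k
    by_cases h1 : k = i
    · subst h1; simp only [hwdef, if_pos rfl]; exact ha
    · by_cases h2 : k = j
      · subst h2; simp only [hwdef, if_neg h1, if_pos rfl]; exact hb
      · simp only [hwdef, if_neg h1, if_neg h2]; exact (hA.1 k).choose_spec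
  obtain ⟨x, hx, m, hm⟩ := hA.2 w hw
  have h1 : x (m + (i : ℤ)) = a := by
    rw [hm i]; simp [hwdef]
  have h2 : x (m + (j : ℤ)) = b := by
    rw [hm j]; simp [hwdef, (Ne.symm hij')]
  have := hx (m + (i : ℤ))
  rw [h1, show m + (i : ℤ) + 1 = m + (j : ℤ) by omega, h2] at this
  exact this

/-- Sum bound from a pair bound. -/
lemma beach_sum_pairs (g : ℕ → ℝ) (B : ℝ) (h0 : ∀ i, 0 ≤ g i)
    (hp : ∀ i, g i + g (i + 1) ≤ B) (n : ℕ) :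
    ∑ i ∈ Finset.range n, g i ≤ ((n + 1) / 2 : ℕ) * B := by
  have hB : 0 ≤ B := le_trans (by have := h0 0; have := h0 1; linarith) (hp 0)
  have heven : ∀ k : ℕ, ∑ i ∈ Finset.range (2 * k), g i ≤ k * B := by
    intro k
    induction k with
    | zero => simp
    | succ k ih =>
      have h2 : 2 * (k + 1) = (2 * k + 1) + 1 := by ring
      rw [h2, Finset.sum_range_succ, Finset.sum_range_succ]
      have := hp (2 * k)
      push_cast
      push_cast at ih
      linarith
  have hmono : ∑ i ∈ Finset.range n, g i ≤ ∑ i ∈ Finset.range (2 * ((n + 1) / 2)), g i := by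
    apply Finset.sum_le_sum_of_subset_of_nonneg
    · apply Finset.range_subset_range.mpr; omega
    · intro i _ _; exact h0 i
  exact hmono.trans (heven _)

end BeachAux4
section BeachAux5

variable {M : ℕ}

lemma beach_score_le (hM : 2 < M) (n : ℕ) :
    ∀ r ∈ {r : ℝ | ∃ A : Fin n → Finset (BeachAlph M), beachIndepLegal M A ∧
      r = ∑ i, Real.log ((A i).card)}, r ≤ (n + 1 : ℕ) * Real.log M := by
  classical
  rintro r ⟨A, hA, rfl⟩
  set g : ℕ → ℝ := fun k => if h : k < n then Real.log ((A ⟨k, h⟩).card) else 0 with hg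
  have hlogM : 0 ≤ Real.log M := Real.log_natCast_nonneg M
  have hsum : ∑ i : Fin n, Real.log ((A i).card) = ∑ k ∈ Finset.range n, g k := by
    rw [← Fin.sum_univ_eq_sum_range]
    apply Finset.sum_congr rfl
    intro i _
    simp [hg, i.isLt]
  have h0 : ∀ k, 0 ≤ g k := by
    intro k
    by_cases h : k < n
    · simp only [hg, dif_pos h]; exact Real.log_natCast_nonneg _
    · simp only [hg, dif_neg h]; exact le_refl _
  have hp : ∀ k, g k + g (k + 1) ≤ 2 * Real.log M := by
    intro k
    by_cases h1 : k + 1 < n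
    · have hk : k < n := by omega
      have hcomp : BeachCompat M (A ⟨k, hk⟩) (A ⟨k + 1, h1⟩) :=
        beach_legal_compat hA ⟨k, hk⟩ ⟨k + 1, h1⟩ (by push_cast; ring)
      have := beach_pair_le hM (hA.1 ⟨k, hk⟩) (hA.1 ⟨k + 1, h1⟩) hcomp
      simp only [hg, dif_pos hk, dif_pos h1]
      exact this
    · by_cases hk : k < n
      · simp only [hg, dif_pos hk, dif_neg h1, add_zero]
        exact beach_log_card_le hM _
      · simp only [hg, dif_neg hk, dif_neg h1, add_zero]
        linarith
  rw [hsum]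
  refine le_trans (beach_sum_pairs g (2 * Real.log M) h0 hp n) ?_
  have hle : ((n + 1) / 2 : ℕ) * 2 ≤ (n + 1 : ℕ) := by omega
  calc (((n + 1) / 2 : ℕ) : ℝ) * (2 * Real.log M)
      = (((n + 1) / 2 : ℕ) : ℝ) * 2 * Real.log M := by ring
    _ ≤ ((n + 1 : ℕ) : ℝ) * Real.log M := by
        apply mul_le_mul_of_nonneg_right _ hlogM
        exact_mod_cast hle

lemma beach_maxScore_le (hM : 2 < M) (n : ℕ) :
    beachMaxScore M n ≤ (n + 1 : ℕ) * Real.log M := by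
  apply Real.sSup_le (beach_score_le hM n)
  positivity

lemma beach_maxScore_ge (hM : 2 < M) (n : ℕ) :
    (n : ℝ) * Real.log M ≤ beachMaxScore M n := by
  have hM0 : 0 < M := by omega
  apply le_csSup
  · exact ⟨(n + 1 : ℕ) * Real.log M, fun r hr => beach_score_le hM n r hr⟩
  · refine ⟨fun _ => beachPos M, ⟨?_, ?_⟩, ?_⟩
    · intro i
      exact ⟨(true, ⟨0, hM0⟩), Finset.mem_filter.mpr ⟨Finset.mem_univ _, rfl⟩⟩
    · intro w hw
      apply beach_pos_word hM0
      intro i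
      have := hw i
      simp only [beachPos, Finset.mem_filter] at this
      exact this.2
    · have : ∑ i : Fin n, Real.log (((fun _ : Fin n => beachPos M) i).card) =
          (n : ℝ) * Real.log M := by
        simp [beachPos_card, Finset.sum_const, Finset.card_univ, nsmul_eq_mul]
      exact this.symm

lemma beach_tendsto (hM : 2 < M) :
    Filter.Tendsto (fun n : ℕ => beachMaxScore M n / n) Filter.atTop
      (nhds (Real.log M)) := by
  have hlogM : 0 ≤ Real.log M := Real.log_natCast_nonneg M
  refine tendsto_of_tendsto_of_tendsto_of_le_of_le'
    (g := fun _ : ℕ => Real.log M) (h := fun n : ℕ => Real.log M + Real.log M / n)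
    tendsto_const_nhds ?_ ?_ ?_
  · have h1 : Filter.Tendsto (fun n : ℕ => Real.log M / n) Filter.atTop (nhds 0) :=
      tendsto_const_div_atTop_nhds_zero_nat _
    simpa using (tendsto_const_nhds.add h1)
  · filter_upwards [Filter.eventually_ge_atTop 1] with n hn
    have hn0 : (0:ℝ) < n := by exact_mod_cast hn
    have := beach_maxScore_ge hM n
    rw [le_div_iff₀ hn0]
    linarith [this]
  · filter_upwards [Filter.eventually_ge_atTop 1] with n hn
    have hn0 : (0:ℝ) < n := by exact_mod_cast hn
    have := beach_maxScore_le hM n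
    rw [div_le_iff₀ hn0]
    have hcast : ((n + 1 : ℕ) : ℝ) = (n : ℝ) + 1 := by push_cast; ring
    rw [hcast] at this
    calc beachMaxScore M n ≤ ((n:ℝ) + 1) * Real.log M := this
      _ = Real.log M * (n:ℝ) + Real.log M := by ring
      _ ≤ (Real.log M + Real.log M / n) * n := by
          rw [add_mul, div_mul_cancel₀ _ hn0.ne']

end BeachAux5
section BeachAux6

lemma beach_shift_sum (G : ℤ → ℝ) (m : ℕ) (hper : G ((0:ℤ) + m) = G 0) :
    ∑ i ∈ Finset.range m, G ((i : ℤ) + 1) = ∑ i ∈ Finset.range m, G (i : ℤ) := by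
  have h1 : ∀ i : ℕ, G ((i : ℤ) + 1) = G (((i + 1 : ℕ) : ℤ)) := fun i => by norm_cast
  have h2 : ∑ i ∈ Finset.range (m + 1), G (i : ℤ)
      = (∑ i ∈ Finset.range m, G (((i + 1 : ℕ)) : ℤ)) + G ((0 : ℕ) : ℤ) :=
    Finset.sum_range_succ' _ m
  have h3 : ∑ i ∈ Finset.range (m + 1), G (i : ℤ)
      = (∑ i ∈ Finset.range m, G (i : ℤ)) + G ((m : ℕ) : ℤ) :=
    Finset.sum_range_succ _ m
  have h4 : G ((m : ℕ) : ℤ) = G ((0 : ℕ) : ℤ) := by simpa using hper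
  have h5 : ∑ i ∈ Finset.range m, G ((i : ℤ) + 1)
      = ∑ i ∈ Finset.range m, G (((i + 1 : ℕ)) : ℤ) :=
    Finset.sum_congr rfl (fun i _ => h1 i)
  rw [h5]
  linarith [h2, h3, h4]

end BeachAux6

/-- For the beach model with `M > 2`: the independence entropy equals `log M`, and the
only words `ŵ` of nonempty subsets with `ŵ^∞` independently legal, score `log M`, and no
repeated letter are the single-letter words `{−M,…,−1}` and `{1,…,M}`. -/
theorem stmt14 (M : ℕ) (hM : 2 < M) :
    (Tendsto (fun n : ℕ => beachMaxScore M n / n) atTop (nhds (Real.log M))) ∧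
    (∀ m : ℕ, 0 < m → ∀ wh : ℤ → Finset (BeachAlph M),
      (∀ i : ℤ, wh (i + m) = wh i) →
      (∀ i : ℤ, (wh i).Nonempty) →
      (∀ y : ℤ → BeachAlph M, (∀ i, y i ∈ wh i) → y ∈ Beach M) →
      ((∑ i ∈ Finset.range m, Real.log ((wh (i : ℤ)).card)) / m = Real.log M) →
      (∀ i j : ℕ, i < m → j < m → wh (i : ℤ) = wh (j : ℤ) → i = j) →
      m = 1 ∧ (wh 0 = beachNeg M ∨ wh 0 = beachPos M)) := by
  constructor
  · exact beach_tendsto hM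
  · intro m hm wh hper hne hy hsum hinj
    classical
    have hcomp : ∀ i : ℤ, BeachCompat M (wh i) (wh (i + 1)) := by
      intro i a ha b hb
      set y : ℤ → BeachAlph M := fun j =>
        if j = i then a else if j = i + 1 then b else (hne j).choose with hydef
      have hmem : ∀ j, y j ∈ wh j := by
        intro j
        by_cases h1 : j = i
        · subst h1; simp only [hydef, if_pos rfl]; exact ha
        · by_cases h2 : j = i + 1
          · subst h2
            simpa [hydef, h1] using hb
          · simp only [hydef]
            rw [if_neg h1, if_neg h2]
            exact (hne j).choose_spec
      have hB := hy y hmem i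
      have e1 : y i = a := by simp [hydef]
      have e2 : y (i + 1) = b := by
        simp [hydef, show ¬(i + 1 = i) by omega]
      rwa [e1, e2] at hB
    have hm0 : (m : ℝ) ≠ 0 := Nat.cast_ne_zero.mpr (by omega)
    rw [div_eq_iff hm0] at hsum
    have hpair : ∀ i : ℤ,
        Real.log ((wh i).card) + Real.log ((wh (i + 1)).card) ≤ 2 * Real.log M :=
      fun i => beach_pair_le hM (hne i) (hne (i + 1)) (hcomp i)
    have hshift := beach_shift_sum (fun i => Real.log ((wh i).card)) m
      (by simpa using congrArg (fun S : Finset (BeachAlph M) => Real.log S.card) (hper 0))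
    have hsum2 : ∑ i ∈ Finset.range m,
        (Real.log ((wh (i : ℤ)).card) + Real.log ((wh ((i : ℤ) + 1)).card))
        = ∑ _i ∈ Finset.range m, (2 * Real.log M) := by
      rw [Finset.sum_add_distrib, hshift, hsum, Finset.sum_const, Finset.card_range,
        nsmul_eq_mul]
      ring
    have hall := (Finset.sum_eq_sum_iff_of_le (s := Finset.range m)
      (f := fun i : ℕ => Real.log ((wh (i : ℤ)).card) + Real.log ((wh ((i : ℤ) + 1)).card))
      (g := fun _ : ℕ => 2 * Real.log M)
      (fun i _ => hpair (i : ℤ))).mp hsum2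
    have heq0 := hall 0 (Finset.mem_range.mpr hm)
    simp only [Nat.cast_zero, zero_add] at heq0
    have hcomp0 : BeachCompat M (wh 0) (wh 1) := by
      have := hcomp 0
      rwa [show (0:ℤ) + 1 = 1 by norm_num] at this
    have hcards := beach_pair_eq hM (hne 0) (hne 1) hcomp0 heq0
    have hkey := beach_key2 hM hcomp0 hcards.1 hcards.2
    have hwh01 : wh 0 = wh 1 := by
      rcases hkey with ⟨h1, h2⟩ | ⟨h1, h2⟩ <;> rw [h1, h2]
    have hm1 : m = 1 := by
      by_contra hm1
      have h01 := hinj 0 1 hm (by omega) (by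
        simpa using hwh01)
      omega
    refine ⟨hm1, ?_⟩
    rcases hkey with ⟨h1, _⟩ | ⟨h1, _⟩
    · exact Or.inr h1
    · exact Or.inl h1
end

section
/- For the Dyck shift D with M > 2 bracket types, the independence entropy equals log M, and the only (up to shift) simple maximizing cycles in the multi-choice shift D̂ are the constant sequences on {α_1,...,α_M} and on {β_1,...,β_M}. -/
open Filter

/-- The Dyck alphabet with `M` bracket types: `Sum.inl j` is the opening bracket `α_j`
and `Sum.inr j` is the closing bracket `β_j`. -/
abbrev DyckAlph (M : ℕ) := Fin M ⊕ Fin M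

/-- Stack semantics for reading a Dyck word: the stack records the types of the
currently unmatched opening brackets; a closing bracket popping a nonmatching opener is
illegal (`none`), while a closing bracket on an empty stack is an unmatched closer
(matched outside the word), which is legal. -/
def dyckStep {M : ℕ} : Option (List (Fin M)) → DyckAlph M → Option (List (Fin M))
  | none, _ => none
  | some s, Sum.inl a => some (a :: s)
  | some s, Sum.inr b =>
    match s with
    | [] => some []
    | a :: t => if a = b then some t else none

/-- A finite word is legal for the Dyck shift iff every matched pair of brackets inside
it has the same type. -/
def dyckLegal {M : ℕ} (l : List (DyckAlph M)) : Prop :=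
  l.foldl dyckStep (some ([] : List (Fin M))) ≠ none

/-- The Dyck shift: bi-infinite sequences all of whose finite subwords are legal. -/
def Dyck (M : ℕ) : Set (ℤ → DyckAlph M) :=
  {x | ∀ k : ℤ, ∀ n : ℕ, dyckLegal (List.ofFn fun i : Fin n => x (k + (i : ℤ)))}

/-- A string of nonempty subsets of the alphabet is independently legal if every
selection yields a word appearing in a point of the Dyck shift. -/
def dyckIndepLegal (M : ℕ) {n : ℕ} (A : Fin n → Finset (DyckAlph M)) : Prop :=
  (∀ i, (A i).Nonempty) ∧ ∀ w : Fin n → DyckAlph M, (∀ i, w i ∈ A i) →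
    ∃ x ∈ Dyck M, ∃ m : ℤ, ∀ i : Fin n, x (m + (i : ℤ)) = w i

/-- The maximal independence score of independently legal strings of length `n`. -/
noncomputable def dyckMaxScore (M : ℕ) (n : ℕ) : ℝ :=
  sSup {r : ℝ | ∃ A : Fin n → Finset (DyckAlph M), dyckIndepLegal M A ∧
    r = ∑ i, Real.log ((A i).card)}

/-- The set `{α_1,…,α_M}` of opening brackets. -/
def dyckOpen (M : ℕ) : Finset (DyckAlph M) := Finset.univ.image Sum.inl

/-- The set `{β_1,…,β_M}` of closing brackets. -/
def dyckClose (M : ℕ) : Finset (DyckAlph M) := Finset.univ.image Sum.inr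

namespace Stmt15

/-! ### Basic facts about the Dyck shift -/

lemma foldl_left_ne_none {M : ℕ} (l : List (DyckAlph M)) (h : ∀ z ∈ l, z.isLeft) :
    ∀ s : List (Fin M), ∃ s', l.foldl dyckStep (some s) = some s' := by
  induction l with
  | nil => intro s; exact ⟨s, rfl⟩
  | cons a t ih =>
    intro s
    obtain ⟨j, rfl⟩ := Sum.isLeft_iff.1 (h a List.mem_cons_self)
    simpa [dyckStep] using ih (fun z hz => h z (List.mem_cons_of_mem _ hz)) (j :: s)

lemma allLeft_mem_dyck {M : ℕ} (x : ℤ → DyckAlph M) (h : ∀ k, (x k).isLeft) :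
    x ∈ Dyck M := by
  intro k n
  obtain ⟨s', hs'⟩ := foldl_left_ne_none (List.ofFn fun i : Fin n => x (k + (i : ℤ)))
    (by
      intro z hz
      rw [List.mem_ofFn] at hz
      obtain ⟨i, rfl⟩ := hz
      exact h _) []
  simp [dyckLegal, hs']

lemma pair_eq {M : ℕ} (x : ℤ → DyckAlph M) (hx : x ∈ Dyck M) (k : ℤ) (a b : Fin M)
    (ha : x k = Sum.inl a) (hb : x (k + 1) = Sum.inr b) : a = b := by
  by_contra hab
  have h2 := hx k 2
  have : (List.ofFn fun i : Fin 2 => x (k + (i : ℤ))) = [x k, x (k + 1)] := by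
    simp [List.ofFn_succ]
  rw [this, ha, hb] at h2
  apply h2
  simp [dyckLegal, dyckStep, hab]

/-! ### Counting openers and closers -/

def oCnt {M : ℕ} (A : Finset (DyckAlph M)) : ℕ := (A.filter (fun x => x.isLeft)).card
def cCnt {M : ℕ} (A : Finset (DyckAlph M)) : ℕ := (A.filter (fun x => x.isRight)).card

lemma card_eq_oCnt_add_cCnt {M : ℕ} (A : Finset (DyckAlph M)) :
    A.card = oCnt A + cCnt A := by
  classical
  rw [oCnt, cCnt]
  rw [← Finset.card_filter_add_card_filter_not (p := fun x : DyckAlph M => x.isLeft)]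
  congr 2
  apply Finset.filter_congr
  intro x _
  cases x <;> simp

lemma card_dyckOpen (M : ℕ) : (dyckOpen M).card = M := by
  rw [dyckOpen, Finset.card_image_of_injective _ Sum.inl_injective]
  simp

lemma card_dyckClose (M : ℕ) : (dyckClose M).card = M := by
  rw [dyckClose, Finset.card_image_of_injective _ Sum.inr_injective]
  simp

lemma filter_left_subset {M : ℕ} (A : Finset (DyckAlph M)) :
    A.filter (fun x => x.isLeft) ⊆ dyckOpen M := by
  intro x hx
  rw [Finset.mem_filter] at hx
  obtain ⟨j, rfl⟩ := Sum.isLeft_iff.1 hx.2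
  simp [dyckOpen]

lemma filter_right_subset {M : ℕ} (A : Finset (DyckAlph M)) :
    A.filter (fun x => x.isRight) ⊆ dyckClose M := by
  intro x hx
  rw [Finset.mem_filter] at hx
  obtain ⟨j, rfl⟩ := Sum.isRight_iff.1 hx.2
  simp [dyckClose]

lemma oCnt_le {M : ℕ} (A : Finset (DyckAlph M)) : oCnt A ≤ M := by
  have := Finset.card_le_card (filter_left_subset A)
  rwa [card_dyckOpen] at this

lemma cCnt_le {M : ℕ} (A : Finset (DyckAlph M)) : cCnt A ≤ M := by
  have := Finset.card_le_card (filter_right_subset A)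
  rwa [card_dyckClose] at this

lemma eq_dyckOpen_of {M : ℕ} (A : Finset (DyckAlph M)) (ho : oCnt A = M) (hc : cCnt A = 0) :
    A = dyckOpen M := by
  have hsub : A ⊆ dyckOpen M := by
    intro x hx
    rcases x with a | b
    · simp [dyckOpen]
    · exfalso
      have : Sum.inr b ∈ A.filter (fun x : DyckAlph M => x.isRight) := by
        simp [hx]
      rw [cCnt, Finset.card_eq_zero] at hc
      simp [hc] at this
  have : A.card = (dyckOpen M).card := by
    rw [card_dyckOpen, card_eq_oCnt_add_cCnt, ho, hc]; ring
  exact Finset.eq_of_subset_of_card_le hsub (le_of_eq this.symm)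

lemma eq_dyckClose_of {M : ℕ} (A : Finset (DyckAlph M)) (hc : cCnt A = M) (ho : oCnt A = 0) :
    A = dyckClose M := by
  have hsub : A ⊆ dyckClose M := by
    intro x hx
    rcases x with a | b
    · exfalso
      have : Sum.inl a ∈ A.filter (fun x : DyckAlph M => x.isLeft) := by
        simp [hx]
      rw [oCnt, Finset.card_eq_zero] at ho
      simp [ho] at this
    · simp [dyckClose]
  have : A.card = (dyckClose M).card := by
    rw [card_dyckClose, card_eq_oCnt_add_cCnt, ho, hc]; ring
  exact Finset.eq_of_subset_of_card_le hsub (le_of_eq this.symm)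

lemma exists_inl_of_oCnt {M : ℕ} {A : Finset (DyckAlph M)} (h : 1 ≤ oCnt A) :
    ∃ a, Sum.inl a ∈ A := by
  rw [oCnt, Finset.one_le_card] at h
  obtain ⟨x, hx⟩ := h
  rw [Finset.mem_filter] at hx
  obtain ⟨j, rfl⟩ := Sum.isLeft_iff.1 hx.2
  exact ⟨j, hx.1⟩

lemma exists_inr_of_cCnt {M : ℕ} {A : Finset (DyckAlph M)} (h : 1 ≤ cCnt A) :
    ∃ b, Sum.inr b ∈ A := by
  rw [cCnt, Finset.one_le_card] at h
  obtain ⟨x, hx⟩ := h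
  rw [Finset.mem_filter] at hx
  obtain ⟨j, rfl⟩ := Sum.isRight_iff.1 hx.2
  exact ⟨j, hx.1⟩

lemma oCnt_le_one {M : ℕ} {A : Finset (DyckAlph M)} (b : Fin M)
    (h : ∀ a, Sum.inl a ∈ A → a = b) : oCnt A ≤ 1 := by
  rw [oCnt]
  apply Finset.card_le_one.2
  intro x hx y hy
  rw [Finset.mem_filter] at hx hy
  obtain ⟨j, rfl⟩ := Sum.isLeft_iff.1 hx.2
  obtain ⟨j', rfl⟩ := Sum.isLeft_iff.1 hy.2
  rw [h j hx.1, h j' hy.1]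

lemma cCnt_le_one {M : ℕ} {A : Finset (DyckAlph M)} (b : Fin M)
    (h : ∀ a, Sum.inr a ∈ A → a = b) : cCnt A ≤ 1 := by
  rw [cCnt]
  apply Finset.card_le_one.2
  intro x hx y hy
  rw [Finset.mem_filter] at hx hy
  obtain ⟨j, rfl⟩ := Sum.isRight_iff.1 hx.2
  obtain ⟨j', rfl⟩ := Sum.isRight_iff.1 hy.2
  rw [h j hx.1, h j' hy.1]

lemma cCnt_dyckOpen (M : ℕ) : cCnt (dyckOpen M) = 0 := by
  rw [cCnt, Finset.card_eq_zero, Finset.filter_eq_empty_iff]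
  intro x hx
  rw [dyckOpen, Finset.mem_image] at hx
  obtain ⟨a, _, rfl⟩ := hx
  simp

lemma oCnt_dyckOpen (M : ℕ) : oCnt (dyckOpen M) = M := by
  have := card_eq_oCnt_add_cCnt (dyckOpen M)
  rw [card_dyckOpen, cCnt_dyckOpen] at this
  omega

/-! ### The potential function and the key local inequality -/

noncomputable def G (M c : ℕ) : ℝ :=
  if c = 0 then Real.log 2 else if c = 1 then Real.log (M + 1) - Real.log M else 0

lemma G0 (M : ℕ) : G M 0 = Real.log 2 := by simp [G]
lemma G1 (M : ℕ) : G M 1 = Real.log ((M:ℝ) + 1) - Real.log M := by norm_num [G]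
lemma G2 (M : ℕ) {c : ℕ} (h : 2 ≤ c) : G M c = 0 := by
  rw [G, if_neg (by omega), if_neg (by omega)]

lemma linj {a b : ℝ} (ha : 0 < a) (hb : 0 < b) (h : Real.log a = Real.log b) : a = b := by
  rw [← Real.exp_log ha, ← Real.exp_log hb, h]

lemma G_bounds (M : ℕ) (hM : 1 ≤ M) (c : ℕ) : 0 ≤ G M c ∧ G M c ≤ Real.log 2 := by
  have hMr : (1:ℝ) ≤ M := by exact_mod_cast hM
  have h1 : Real.log M ≤ Real.log ((M:ℝ) + 1) :=
    Real.log_le_log (by linarith) (by linarith)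
  have h2 : Real.log ((M:ℝ) + 1) ≤ Real.log ((2:ℝ) * M) :=
    Real.log_le_log (by linarith) (by linarith)
  have h3 : Real.log ((2:ℝ) * M) = Real.log 2 + Real.log M :=
    Real.log_mul (by norm_num) (by linarith)
  have h4 : 0 ≤ Real.log 2 := Real.log_nonneg (by norm_num)
  rcases Nat.lt_or_ge c 2 with hc | hc
  · interval_cases c
    · rw [G0]; exact ⟨h4, le_refl _⟩
    · rw [G1]; constructor <;> linarith
  · rw [G2 M hc]; exact ⟨le_refl _, h4⟩

lemma key (M o c c' : ℕ) (hM : 3 ≤ M) (h1 : 1 ≤ o + c) (ho : o ≤ M) (hc : c ≤ M)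
    (hall : 1 ≤ o → 1 ≤ c' → o = 1 ∧ c' = 1) :
    Real.log (↑(o + c)) + G M c ≤ Real.log M + G M c' ∧
      (Real.log (↑(o + c)) + G M c = Real.log M + G M c' →
        (c' = 0 ∧ o = M ∧ (c = 0 ∨ c = M)) ∨ (c' = 1 ∧ o = 1 ∧ c = M) ∨
          (2 ≤ c' ∧ o = 0 ∧ c = M)) := by
  have hMr : (3:ℝ) ≤ M := by exact_mod_cast hM
  have hxy1 : (1:ℝ) ≤ (o:ℝ) + c := by exact_mod_cast h1
  have hx : (o:ℝ) ≤ M := by exact_mod_cast ho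
  have hy : (c:ℝ) ≤ M := by exact_mod_cast hc
  have hox : (0:ℝ) ≤ o := Nat.cast_nonneg o
  have hoy : (0:ℝ) ≤ c := Nat.cast_nonneg c
  have hlog2 : Real.log 2 < Real.log M := Real.log_lt_log (by norm_num) (by linarith)
  have hlogM1 : Real.log M < Real.log ((M:ℝ) + 1) := Real.log_lt_log (by linarith) (by linarith)
  have hlogMpos : 0 < Real.log M := Real.log_pos (by linarith)
  have hlog2pos : 0 < Real.log 2 := Real.log_pos (by norm_num)
  have h2M : Real.log ((2:ℝ) * M) = Real.log 2 + Real.log M :=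
    Real.log_mul (by norm_num) (by linarith)
  rcases Nat.lt_or_ge c' 2 with hc2 | hc2
  · interval_cases c'
    · -- c' = 0
      rw [G0]
      rcases Nat.lt_or_ge c 2 with hcc | hcc
      · interval_cases c
        · -- c = 0
          rw [G0]
          have hle : Real.log ((o:ℝ)) ≤ Real.log M :=
            Real.log_le_log (by push_cast [add_zero] at hxy1; linarith) hx
          constructor
          · push_cast [add_zero]; linarith
          · intro he
            push_cast [add_zero] at he hxy1
            left
            refine ⟨rfl, ?_, Or.inl rfl⟩
            have h' : (o:ℝ) = (M:ℝ) := linj (by linarith) (by linarith) (by linarith)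
            exact_mod_cast h'
        · -- c = 1, strict
          rw [G1]
          have hprod : Real.log (((o:ℝ) + 1) * ((M:ℝ) + 1)) <
              Real.log ((2:ℝ) * ((M:ℝ) * M)) :=
            Real.log_lt_log (by nlinarith) (by nlinarith)
          rw [Real.log_mul (by linarith) (by linarith),
            Real.log_mul (by norm_num) (by nlinarith),
            Real.log_mul (by linarith) (by linarith)] at hprod
          constructor
          · push_cast [zero_add, add_zero, Real.log_one]; linarith
          · intro he; exfalso; push_cast [zero_add, add_zero, Real.log_one] at he; linarith
      · -- c ≥ 2
        rw [G2 M hcc]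
        have hle : Real.log ((o:ℝ) + c) ≤ Real.log ((2:ℝ) * M) :=
          Real.log_le_log (by linarith) (by linarith)
        constructor
        · push_cast [zero_add, add_zero, Real.log_one]; linarith
        · intro he
          push_cast [zero_add, add_zero, Real.log_one] at he
          left
          have h' : ((o:ℝ) + c) = (2:ℝ) * M := linj (by linarith) (by linarith) (by linarith)
          have h'' : ((o + c : ℕ) : ℝ) = ((2 * M : ℕ) : ℝ) := by push_cast; linarith
          have hoc : o + c = 2 * M := by exact_mod_cast h''
          exact ⟨rfl, by omega, Or.inr (by omega)⟩
    · -- c' = 1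
      rw [G1]
      have ho1 : o ≤ 1 := by
        by_contra hcon
        have := hall (by omega) (by omega)
        omega
      rcases Nat.lt_or_ge c 2 with hcc | hcc
      · interval_cases o <;> interval_cases c
        · omega
        · -- o=0, c=1 strict
          rw [G1]
          constructor
          · push_cast [zero_add, add_zero, Real.log_one]; linarith
          · intro he; exfalso; push_cast [zero_add, add_zero, Real.log_one] at he; linarith
        · -- o=1, c=0 strict
          rw [G0]
          constructor
          · push_cast [zero_add, add_zero, Real.log_one]; linarith
          · intro he; exfalso; push_cast [zero_add, add_zero, Real.log_one] at he; linarith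
        · -- o=1, c=1 strict
          rw [G1]
          have h11 : Real.log ((1:ℝ) + 1) = Real.log 2 := by norm_num
          constructor
          · push_cast [zero_add, add_zero, Real.log_one]; linarith
          · intro he; exfalso; push_cast [zero_add, add_zero, Real.log_one] at he; linarith
      · -- c ≥ 2
        rw [G2 M hcc]
        have hcr : (2:ℝ) ≤ (c:ℝ) := by exact_mod_cast hcc
        interval_cases o
        · -- o=0 strict
          have hlt : Real.log ((c:ℝ)) < Real.log ((M:ℝ) + 1) :=
            Real.log_lt_log (by linarith) (by linarith)
          constructor
          · push_cast [zero_add, add_zero, Real.log_one]; linarith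
          · intro he; exfalso; push_cast [zero_add, add_zero, Real.log_one] at he; linarith
        · -- o=1
          have hle : Real.log ((1:ℝ) + c) ≤ Real.log ((M:ℝ) + 1) :=
            Real.log_le_log (by linarith) (by linarith)
          constructor
          · push_cast [zero_add, add_zero, Real.log_one]; linarith
          · intro he
            push_cast [zero_add, add_zero, Real.log_one] at he
            right; left
            refine ⟨rfl, rfl, ?_⟩
            have h' : ((1:ℝ) + c) = ((M:ℝ) + 1) := linj (by linarith) (by linarith) (by linarith)
            have h'' : (c:ℝ) = (M:ℝ) := by linarith
            exact_mod_cast h''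
  · -- c' ≥ 2
    have ho0 : o = 0 := by
      by_contra hcon
      have := hall (by omega) (by omega)
      omega
    subst ho0
    rw [G2 M hc2]
    rcases Nat.lt_or_ge c 2 with hcc | hcc
    · interval_cases c
      · omega
      · -- c = 1, strict
        rw [G1]
        have hMM : Real.log ((M:ℝ) + 1) < Real.log ((M:ℝ) * M) :=
          Real.log_lt_log (by linarith) (by nlinarith)
        rw [Real.log_mul (by linarith) (by linarith)] at hMM
        constructor
        · push_cast [zero_add, add_zero, Real.log_one]; linarith
        · intro he; exfalso; push_cast [zero_add, add_zero, Real.log_one] at he; linarith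
    · -- c ≥ 2
      rw [G2 M hcc]
      have hcr : (2:ℝ) ≤ (c:ℝ) := by exact_mod_cast hcc
      have hle : Real.log ((c:ℝ)) ≤ Real.log (M:ℝ) :=
        Real.log_le_log (by linarith) (by linarith)
      constructor
      · push_cast [zero_add, add_zero, Real.log_one]; linarith
      · intro he
        push_cast [zero_add, add_zero, Real.log_one] at he
        right; right
        refine ⟨hc2, rfl, ?_⟩
        have h' : ((c:ℝ)) = (M:ℝ) := linj (by linarith) (by linarith) (by linarith)
        exact_mod_cast h'

/-! ### Adjacency constraints extracted from legality of all selections -/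

lemma adjZ_types {M : ℕ} (wh : ℤ → Finset (DyckAlph M)) (hne : ∀ i, (wh i).Nonempty)
    (hsel : ∀ y : ℤ → DyckAlph M, (∀ i, y i ∈ wh i) → y ∈ Dyck M) (i : ℤ)
    (a b : Fin M) (ha : Sum.inl a ∈ wh i) (hb : Sum.inr b ∈ wh (i + 1)) : a = b := by
  classical
  set y : ℤ → DyckAlph M := fun j =>
    if j = i then Sum.inl a else if j = i + 1 then Sum.inr b else (hne j).choose with hy
  have hmem : ∀ j, y j ∈ wh j := by
    intro j
    by_cases h1 : j = i
    · subst h1; simpa [hy] using ha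
    · by_cases h2 : j = i + 1
      · subst h2; simpa [hy, h1] using hb
      · simpa [hy, h1, h2] using (hne j).choose_spec
  have hyD := hsel y hmem
  apply pair_eq y hyD i a b
  · simp [hy]
  · have : i + 1 ≠ i := by omega
    simp [hy, this]

lemma adjF_types {M n : ℕ} (A : Fin n → Finset (DyckAlph M)) (hA : dyckIndepLegal M A)
    (i : ℕ) (hi : i + 1 < n) (a b : Fin M)
    (ha : Sum.inl a ∈ A ⟨i, by omega⟩) (hb : Sum.inr b ∈ A ⟨i + 1, hi⟩) : a = b := by
  classical
  set w : Fin n → DyckAlph M := fun j =>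
    if j = ⟨i, by omega⟩ then Sum.inl a else if j = ⟨i + 1, hi⟩ then Sum.inr b
      else (hA.1 j).choose with hw
  have hmem : ∀ j, w j ∈ A j := by
    intro j
    by_cases h1 : j = ⟨i, by omega⟩
    · subst h1; simpa [hw] using ha
    · by_cases h2 : j = ⟨i + 1, hi⟩
      · subst h2; simpa [hw, h1] using hb
      · simpa [hw, h1, h2] using (hA.1 j).choose_spec
  obtain ⟨x, hxD, m, hxw⟩ := hA.2 w hmem
  apply pair_eq x hxD (m + i) a b
  · have h1 := hxw ⟨i, by omega⟩
    have hne : (⟨i, by omega⟩ : Fin n) ≠ ⟨i + 1, hi⟩ := by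
      simp [Fin.ext_iff]
    rw [hw] at h1
    simp only [if_pos rfl] at h1
    simpa using h1
  · have h1 := hxw ⟨i + 1, hi⟩
    have hne : (⟨i + 1, hi⟩ : Fin n) ≠ ⟨i, by omega⟩ := by
      simp [Fin.ext_iff]
    rw [hw] at h1
    simp only [if_neg hne, if_pos rfl, if_true] at h1
    rw [← h1]
    congr 1
    push_cast
    ring


/-! ### Part 1: bounds on the maximal score -/

lemma score_le {M n : ℕ} (hM : 3 ≤ M) (A : Fin n → Finset (DyckAlph M))
    (hA : dyckIndepLegal M A) :
    ∑ i : Fin n, Real.log ((A i).card) ≤ n * Real.log M + Real.log 2 := by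
  classical
  have hM0 : 0 < M := by omega
  set B : ℕ → Finset (DyckAlph M) := fun i => if h : i < n then A ⟨i, h⟩ else dyckOpen M with hB
  have hBA : ∀ i : Fin n, B i.val = A i := by
    intro i
    simp [hB, i.isLt]
  have hBne : ∀ i, (B i).Nonempty := by
    intro i
    by_cases h : i < n
    · simp only [hB, dif_pos h]; exact hA.1 _
    · simp only [hB, dif_neg h]
      exact ⟨Sum.inl ⟨0, hM0⟩, by simp [dyckOpen]⟩
  have hall : ∀ i : ℕ, 1 ≤ oCnt (B i) → 1 ≤ cCnt (B (i+1)) →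
      oCnt (B i) = 1 ∧ cCnt (B (i+1)) = 1 := by
    intro i h1 h2
    by_cases hi : i + 1 < n
    · have hBi : B i = A ⟨i, by omega⟩ := by simp [hB, show i < n by omega]
      have hBi1 : B (i+1) = A ⟨i+1, hi⟩ := by simp [hB, hi]
      rw [hBi] at h1 ⊢
      rw [hBi1] at h2 ⊢
      obtain ⟨a0, ha0⟩ := exists_inl_of_oCnt h1
      obtain ⟨b0, hb0⟩ := exists_inr_of_cCnt h2
      constructor
      · have := oCnt_le_one b0 (fun a ha => adjF_types A hA i hi a b0 ha hb0)
        omega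
      · have := cCnt_le_one a0 (fun b hb => (adjF_types A hA i hi a0 b ha0 hb).symm)
        omega
    · exfalso
      have hd : B (i+1) = dyckOpen M := by simp [hB, hi]
      rw [hd, cCnt_dyckOpen] at h2
      omega
  have hKey : ∀ i ∈ Finset.range n, Real.log (((B i).card : ℕ)) ≤
      Real.log M + (G M (cCnt (B (i+1))) - G M (cCnt (B i))) := by
    intro i _
    have h1 : 1 ≤ oCnt (B i) + cCnt (B i) := by
      have := Finset.card_pos.2 (hBne i)
      have hc := card_eq_oCnt_add_cCnt (B i)
      omega
    have hk := (key M (oCnt (B i)) (cCnt (B i)) (cCnt (B (i+1))) hM h1 (oCnt_le _) (cCnt_le _)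
      (hall i)).1
    rw [card_eq_oCnt_add_cCnt (B i)]
    linarith
  have hsum := Finset.sum_le_sum hKey
  rw [Finset.sum_add_distrib, Finset.sum_const, Finset.sum_range_sub
    (fun k => G M (cCnt (B k))) n, Finset.card_range] at hsum
  have hG0 := G_bounds M (by omega) (cCnt (B n))
  have hG1 := G_bounds M (by omega) (cCnt (B 0))
  have hsum2 : ∑ i : Fin n, Real.log ((A i).card) =
      ∑ i ∈ Finset.range n, Real.log ((B i).card) := by
    rw [← Fin.sum_univ_eq_sum_range (fun k => Real.log ((B k).card)) n]
    apply Finset.sum_congr rfl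
    intro i _
    rw [hBA i]
  rw [hsum2]
  have hns : (n • Real.log M : ℝ) = n * Real.log M := nsmul_eq_mul n (Real.log M)
  calc ∑ i ∈ Finset.range n, Real.log ((B i).card)
      ≤ n • Real.log M + (G M (cCnt (B n)) - G M (cCnt (B 0))) := hsum
    _ ≤ n * Real.log M + Real.log 2 := by rw [hns]; linarith [hG0.2, hG1.1]

lemma allopen_score {M : ℕ} (hM0 : 0 < M) (n : ℕ) :
    (n : ℝ) * Real.log M ∈ {r : ℝ | ∃ A : Fin n → Finset (DyckAlph M), dyckIndepLegal M A ∧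
      r = ∑ i, Real.log ((A i).card)} := by
  classical
  refine ⟨fun _ => dyckOpen M, ⟨fun _ => ⟨Sum.inl ⟨0, hM0⟩, by simp [dyckOpen]⟩, ?_⟩, ?_⟩
  · intro w hw
    refine ⟨fun k : ℤ => if h : 0 ≤ k ∧ k < n then w ⟨k.toNat, by omega⟩ else Sum.inl ⟨0, hM0⟩,
      ?_, 0, ?_⟩
    · apply allLeft_mem_dyck
      intro k
      by_cases h : 0 ≤ k ∧ k < n
      · simp only [dif_pos h]
        have hm := hw ⟨k.toNat, by omega⟩
        rw [dyckOpen, Finset.mem_image] at hm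
        obtain ⟨a, _, ha⟩ := hm
        rw [← ha]; simp
      · simp [dif_neg h]
    · intro i
      have hi' : ((i : ℕ) : ℤ) < (n : ℤ) := by exact_mod_cast i.isLt
      have h : (0:ℤ) ≤ 0 + (i:ℤ) ∧ 0 + (i:ℤ) < n := by omega
      simp only [dif_pos h]
      congr 1
      apply Fin.ext
      simp
  · simp only []
    rw [show ∑ i : Fin n, Real.log ((((fun _ => dyckOpen M) i : Finset (DyckAlph M))).card) =
        ∑ _i : Fin n, Real.log ((dyckOpen M).card) from rfl]
    rw [card_dyckOpen, Finset.sum_const, Finset.card_univ, Fintype.card_fin]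
    exact (nsmul_eq_mul n (Real.log M)).symm

lemma dms_bounds {M : ℕ} (hM : 3 ≤ M) (n : ℕ) :
    (n:ℝ) * Real.log M ≤ dyckMaxScore M n ∧
      dyckMaxScore M n ≤ n * Real.log M + Real.log 2 := by
  have hmem := allopen_score (by omega : 0 < M) n
  have hub : ∀ r ∈ {r : ℝ | ∃ A : Fin n → Finset (DyckAlph M), dyckIndepLegal M A ∧
      r = ∑ i, Real.log ((A i).card)}, r ≤ n * Real.log M + Real.log 2 := by
    rintro r ⟨A, hA, rfl⟩
    exact score_le hM A hA
  exact ⟨le_csSup ⟨_, hub⟩ hmem, csSup_le ⟨_, hmem⟩ hub⟩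

lemma part1 {M : ℕ} (hM : 3 ≤ M) :
    Tendsto (fun n : ℕ => dyckMaxScore M n / n) atTop (nhds (Real.log M)) := by
  have hup : Tendsto (fun n : ℕ => Real.log M + Real.log 2 / n) atTop (nhds (Real.log M)) := by
    have h0 := (tendsto_const_div_atTop_nhds_zero_nat (Real.log 2)).const_add (Real.log M)
    simpa using h0
  apply tendsto_of_tendsto_of_tendsto_of_le_of_le' tendsto_const_nhds hup
  · filter_upwards [eventually_ge_atTop 1] with n hn
    have hn' : (0:ℝ) < n := by exact_mod_cast Nat.pos_of_ne_zero (by omega)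
    rw [le_div_iff₀ hn']
    have hlo := (dms_bounds hM n).1
    linarith [mul_comm (Real.log M) (n:ℝ)]
  · filter_upwards [eventually_ge_atTop 1] with n hn
    have hn' : (0:ℝ) < n := by exact_mod_cast Nat.pos_of_ne_zero (by omega)
    rw [div_le_iff₀ hn']
    have hhi := (dms_bounds hM n).2
    have hexp : (Real.log M + Real.log 2 / n) * n = n * Real.log M + Real.log 2 := by
      field_simp
    linarith


/-! ### Part 2: analysis of simple maximizing cycles -/

lemma part2 {M : ℕ} (hM3 : 3 ≤ M) (m : ℕ) (hm : 0 < m) (wh : ℤ → Finset (DyckAlph M))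
    (hper : ∀ i : ℤ, wh (i + m) = wh i)
    (hne : ∀ i : ℤ, (wh i).Nonempty)
    (hsel : ∀ y : ℤ → DyckAlph M, (∀ i, y i ∈ wh i) → y ∈ Dyck M)
    (hsum : (∑ i ∈ Finset.range m, Real.log ((wh (i : ℤ)).card)) / m = Real.log M)
    (hdist : ∀ i j : ℕ, i < m → j < m → wh (i : ℤ) = wh (j : ℤ) → i = j) :
    m = 1 ∧ (wh 0 = dyckOpen M ∨ wh 0 = dyckClose M) := by
  classical
  set o : ℤ → ℕ := fun i => oCnt (wh i) with hoDef
  set c : ℤ → ℕ := fun i => cCnt (wh i) with hcDef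
  have hcard : ∀ i : ℤ, (wh i).card = o i + c i := fun i => card_eq_oCnt_add_cCnt _
  have h1 : ∀ i : ℤ, 1 ≤ o i + c i := by
    intro i
    have hp := Finset.card_pos.2 (hne i)
    have hq := hcard i
    omega
  have hall : ∀ i : ℤ, 1 ≤ o i → 1 ≤ c (i+1) → o i = 1 ∧ c (i+1) = 1 := by
    intro i h1o h1c
    obtain ⟨a0, ha0⟩ := exists_inl_of_oCnt h1o
    obtain ⟨b0, hb0⟩ := exists_inr_of_cCnt h1c
    constructor
    · have h2 : o i ≤ 1 := oCnt_le_one b0 (fun a ha => adjZ_types wh hne hsel i a b0 ha hb0)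
      omega
    · have h2 : c (i+1) ≤ 1 :=
        cCnt_le_one a0 (fun b hb => (adjZ_types wh hne hsel i a0 b ha0 hb).symm)
      omega
  have hkey := fun i : ℤ =>
    key M (o i) (c i) (c (i+1)) hM3 (h1 i) (oCnt_le _) (cCnt_le _) (hall i)
  have hshift : ∀ (q : ℕ) (x : ℤ), wh (x + q * m) = wh x := by
    intro q
    induction q with
    | zero => intro x; simp
    | succ q ih =>
      intro x
      have he : x + ((q+1:ℕ):ℤ) * m = (x + q * m) + m := by push_cast; ring
      rw [he, hper, ih]
  have hmR : ((m:ℕ):ℝ) ≠ 0 := Nat.cast_ne_zero.2 (by omega)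
  have hsum' : (∑ i ∈ Finset.range m, Real.log ((wh (i : ℤ)).card)) = m * Real.log M := by
    rw [div_eq_iff hmR] at hsum
    linarith
  set g : ℕ → ℝ := fun k => G M (c (k : ℤ)) with hg
  have hgper : g m = g 0 := by
    have hw0 : wh ((m:ℕ):ℤ) = wh 0 := by
      have := hper 0
      rwa [zero_add] at this
    simp only [hg, hcDef, Nat.cast_zero]
    rw [hw0]
  have hle : ∀ i ∈ Finset.range m, Real.log ((wh (i:ℤ)).card) ≤
      Real.log M + (g (i+1) - g i) := by
    intro i _
    have hk := (hkey (i:ℤ)).1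
    have hcast : (((i+1:ℕ)):ℤ) = ((i:ℕ):ℤ) + 1 := by push_cast; ring
    rw [hcard]
    simp only [hg]
    rw [hcast]
    linarith
  have htel : ∑ i ∈ Finset.range m, (Real.log M + (g (i+1) - g i)) = m * Real.log M := by
    rw [Finset.sum_add_distrib, Finset.sum_const, Finset.card_range, Finset.sum_range_sub g m,
      hgper, nsmul_eq_mul]
    ring
  have heq : ∀ i ∈ Finset.range m, Real.log ((wh (i:ℤ)).card) =
      Real.log M + (g (i+1) - g i) :=
    (Finset.sum_eq_sum_iff_of_le hle).1 (by rw [hsum', htel])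
  have D : ∀ j : ℕ, j < m →
      ((c ((j:ℤ)+1) = 0 ∧ o (j:ℤ) = M ∧ (c (j:ℤ) = 0 ∨ c (j:ℤ) = M)) ∨
       (c ((j:ℤ)+1) = 1 ∧ o (j:ℤ) = 1 ∧ c (j:ℤ) = M) ∨
       (2 ≤ c ((j:ℤ)+1) ∧ o (j:ℤ) = 0 ∧ c (j:ℤ) = M)) := by
    intro j hj
    apply (hkey (j:ℤ)).2
    have hcast : (((j+1:ℕ)):ℤ) = ((j:ℕ):ℤ) + 1 := by push_cast; ring
    have h := heq j (Finset.mem_range.2 hj)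
    rw [hcard] at h
    simp only [hg] at h
    rw [hcast] at h
    linarith
  have hwhj : ∀ j : ℕ, wh (j:ℤ) = wh ((j % m : ℕ):ℤ) ∧
      wh ((j:ℤ)+1) = wh (((j % m : ℕ):ℤ)+1) := by
    intro j
    have hd : j = m * (j / m) + j % m := (Nat.div_add_mod j m).symm
    constructor
    · have he : ((j:ℕ):ℤ) = ((j % m : ℕ):ℤ) + ((j / m : ℕ):ℤ) * m := by
        conv_lhs => rw [hd]
        push_cast
        ring
      rw [he, hshift]
    · have he : ((j:ℕ):ℤ) + 1 = (((j % m : ℕ):ℤ) + 1) + ((j / m : ℕ):ℤ) * m := by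
        conv_lhs => rw [hd]
        push_cast
        ring
      rw [he, hshift]
  have DAll : ∀ j : ℕ,
      ((c ((j:ℤ)+1) = 0 ∧ o (j:ℤ) = M ∧ (c (j:ℤ) = 0 ∨ c (j:ℤ) = M)) ∨
       (c ((j:ℤ)+1) = 1 ∧ o (j:ℤ) = 1 ∧ c (j:ℤ) = M) ∨
       (2 ≤ c ((j:ℤ)+1) ∧ o (j:ℤ) = 0 ∧ c (j:ℤ) = M)) := by
    intro j
    have e1 : o (j:ℤ) = o ((j % m : ℕ):ℤ) := by
      simp only [hoDef]; rw [(hwhj j).1]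
    have e2 : c (j:ℤ) = c ((j % m : ℕ):ℤ) := by
      simp only [hcDef]; rw [(hwhj j).1]
    have e3 : c ((j:ℤ)+1) = c (((j % m : ℕ):ℤ)+1) := by
      simp only [hcDef]; rw [(hwhj j).2]
    rw [e1, e2, e3]
    exact D (j % m) (Nat.mod_lt _ hm)
  have hnc : ∀ j : ℕ, ((j+1:ℕ):ℤ) = (j:ℤ)+1 := by intro j; push_cast; ring
  have claim1 : ∀ j : ℕ, o (j:ℤ) = M ∧ c (j:ℤ) = 0 →
      o ((j+1:ℕ):ℤ) = M ∧ c ((j+1:ℕ):ℤ) = 0 := by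
    rintro j ⟨hoj, hcj⟩
    rcases DAll j with ⟨h1',h2',h3'⟩|⟨h1',h2',h3'⟩|⟨h1',h2',h3'⟩
    · have hc1 : c ((j+1:ℕ):ℤ) = 0 := by rw [hnc j]; exact h1'
      refine ⟨?_, hc1⟩
      rcases DAll (j+1) with ⟨k1,k2,k3⟩|⟨k1,k2,k3⟩|⟨k1,k2,k3⟩
      · exact k2
      · omega
      · omega
    · omega
    · omega
  have E1 : ∀ j : ℕ, ¬(o (j:ℤ) = 1 ∧ c (j:ℤ) = M) := by
    rintro j ⟨h1o, h1c⟩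
    rcases DAll j with ⟨h1',h2',h3'⟩|⟨h1',h2',h3'⟩|⟨h1',h2',h3'⟩
    · omega
    · have hc1 : c ((j+1:ℕ):ℤ) = 1 := by rw [hnc j]; exact h1'
      rcases DAll (j+1) with ⟨k1,k2,k3⟩|⟨k1,k2,k3⟩|⟨k1,k2,k3⟩ <;> omega
    · omega
  have E2 : ∀ j : ℕ, ¬(o (j:ℤ) = M ∧ c (j:ℤ) = M) := by
    rintro j ⟨hoj, hcj⟩
    rcases DAll j with ⟨h1',h2',h3'⟩|⟨h1',h2',h3'⟩|⟨h1',h2',h3'⟩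
    · have hc1 : c ((j+1:ℕ):ℤ) = 0 := by rw [hnc j]; exact h1'
      have hnext : o ((j+1:ℕ):ℤ) = M ∧ c ((j+1:ℕ):ℤ) = 0 := by
        rcases DAll (j+1) with ⟨k1,k2,k3⟩|⟨k1,k2,k3⟩|⟨k1,k2,k3⟩
        · exact ⟨k2, hc1⟩
        · omega
        · omega
      have hchain : ∀ k : ℕ, o ((j+1+k:ℕ):ℤ) = M ∧ c ((j+1+k:ℕ):ℤ) = 0 := by
        intro k
        induction k with
        | zero => simpa using hnext
        | succ k ih =>
          have hstep := claim1 (j+1+k) ih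
          have he : j+1+(k+1) = (j+1+k)+1 := by omega
          rw [he]
          exact hstep
      have hm1 := hchain (m-1)
      have he : j+1+(m-1) = j+m := by omega
      rw [he] at hm1
      have hWp : wh ((j+m : ℕ):ℤ) = wh (j:ℤ) := by
        have hcast : ((j+m:ℕ):ℤ) = (j:ℤ) + ((1:ℕ):ℤ) * m := by push_cast; ring
        rw [hcast, hshift 1]
      have hcc : c ((j+m:ℕ):ℤ) = c (j:ℤ) := by simp only [hcDef]; rw [hWp]
      omega
    · omega
    · omega
  have claim1' : ∀ j : ℕ, o (j:ℤ) = 0 ∧ c (j:ℤ) = M →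
      o ((j+1:ℕ):ℤ) = 0 ∧ c ((j+1:ℕ):ℤ) = M := by
    rintro j ⟨hoj, hcj⟩
    rcases DAll j with ⟨h1',h2',h3'⟩|⟨h1',h2',h3'⟩|⟨h1',h2',h3'⟩
    · omega
    · omega
    · have hc2 : 2 ≤ c ((j+1:ℕ):ℤ) := by rw [hnc j]; exact h1'
      rcases DAll (j+1) with ⟨k1,k2,k3⟩|⟨k1,k2,k3⟩|⟨k1,k2,k3⟩
      · exact absurd ⟨k2, by omega⟩ (E2 (j+1))
      · exact absurd ⟨k2, k3⟩ (E1 (j+1))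
      · exact ⟨k2, k3⟩
  have hs0 : (o ((0:ℕ):ℤ) = M ∧ c ((0:ℕ):ℤ) = 0) ∨
      (o ((0:ℕ):ℤ) = 0 ∧ c ((0:ℕ):ℤ) = M) := by
    rcases DAll 0 with ⟨h1',h2',h3'⟩|⟨h1',h2',h3'⟩|⟨h1',h2',h3'⟩
    · left
      refine ⟨h2', ?_⟩
      rcases h3' with h|h
      · exact h
      · exact absurd ⟨h2', h⟩ (E2 0)
    · exact absurd ⟨h2', h3'⟩ (E1 0)
    · right; exact ⟨h2', h3'⟩
  rcases hs0 with ⟨hoM, hc0⟩ | ⟨ho0, hcM⟩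
  · have hchain : ∀ k : ℕ, o (k:ℤ) = M ∧ c (k:ℤ) = 0 := by
      intro k
      induction k with
      | zero => exact ⟨hoM, hc0⟩
      | succ k ih =>
        have := claim1 k ih
        rwa [hnc k] at this
    have hwo : ∀ i : ℕ, i < m → wh (i:ℤ) = dyckOpen M := by
      intro i _
      exact eq_dyckOpen_of _ (hchain i).1 (hchain i).2
    have hm1 : m = 1 := by
      by_contra hcon
      have := hdist 0 1 (by omega) (by omega)
        (by rw [hwo 0 (by omega), hwo 1 (by omega)])
      omega
    refine ⟨hm1, Or.inl ?_⟩
    have := hwo 0 (by omega)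
    exact_mod_cast this
  · have hchain : ∀ k : ℕ, o (k:ℤ) = 0 ∧ c (k:ℤ) = M := by
      intro k
      induction k with
      | zero => exact ⟨ho0, hcM⟩
      | succ k ih =>
        have := claim1' k ih
        rwa [hnc k] at this
    have hwo : ∀ i : ℕ, i < m → wh (i:ℤ) = dyckClose M := by
      intro i _
      exact eq_dyckClose_of _ (hchain i).2 (hchain i).1
    have hm1 : m = 1 := by
      by_contra hcon
      have := hdist 0 1 (by omega) (by omega)
        (by rw [hwo 0 (by omega), hwo 1 (by omega)])
      omega
    refine ⟨hm1, Or.inr ?_⟩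
    have := hwo 0 (by omega)
    exact_mod_cast this

end Stmt15

/-- For the Dyck shift with `M > 2` bracket types: the independence entropy equals
`log M`, and the only (up to shift) simple maximizing cycles in the multi-choice shift
are the constant sequences on `{α_1,…,α_M}` and on `{β_1,…,β_M}`. -/
theorem stmt15 (M : ℕ) (hM : 2 < M) :
    (Tendsto (fun n : ℕ => dyckMaxScore M n / n) atTop (nhds (Real.log M))) ∧
    (∀ m : ℕ, 0 < m → ∀ wh : ℤ → Finset (DyckAlph M),
      (∀ i : ℤ, wh (i + m) = wh i) →
      (∀ i : ℤ, (wh i).Nonempty) →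
      (∀ y : ℤ → DyckAlph M, (∀ i, y i ∈ wh i) → y ∈ Dyck M) →
      ((∑ i ∈ Finset.range m, Real.log ((wh (i : ℤ)).card)) / m = Real.log M) →
      (∀ i j : ℕ, i < m → j < m → wh (i : ℤ) = wh (j : ℤ) → i = j) →
      m = 1 ∧ (wh 0 = dyckOpen M ∨ wh 0 = dyckClose M)) := by
  have hM3 : 3 ≤ M := hM
  constructor
  · exact Stmt15.part1 hM3
  · intro m hm wh hper hne hsel hsum hdist
    exact Stmt15.part2 hM3 m hm wh hper hne hsel hsum hdist
end

section
/- Let (Y_n)_{n≥1} be an exchangeable sequence of random variables taking values in a finite set Ω, and let F ⊂ ℕ be a finite set with 1 ∉ F. Suppose the full joint distribution of (Y_n) is invariant under all finite permutations of ℕ fixing 1. Then Y_1 and (Y_j)_{j∈F} are conditionally independent given (Y_j)_{j ∉ F∪{1}}. -/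
open MeasureTheory
open scoped NNReal

set_option linter.unusedVariables false
set_option linter.unusedSectionVars false
set_option linter.unreachableTactic false
set_option linter.unusedTactic false
set_option linter.unnecessarySeqFocus false


lemma aux_allMeasurable {ι Ω : Type*} [Finite ι] [Finite Ω] [MeasurableSpace Ω]
    [MeasurableSingletonClass Ω] (s : Set (ι → Ω)) : MeasurableSet s := by
  haveI : MeasurableSingletonClass (ι → Ω) := by
    refine ⟨fun v => ?_⟩
    have : ({v} : Set (ι → Ω)) = ⋂ i, (fun z : ι → Ω => z i) ⁻¹' {v i} := by
      ext z; simp [funext_iff]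
    rw [this]
    exact MeasurableSet.iInter fun i => (measurable_pi_apply i) (measurableSet_singleton _)
  exact s.toFinite.measurableSet

lemma aux_factor {α γ : Type*} [mα : MeasurableSpace α] [mγ : MeasurableSpace γ]
    (T : α → γ) {φ : α → ℝ}
    (hφ : StronglyMeasurable[mγ.comap T] φ) :
    ∃ g : γ → ℝ, φ = g ∘ T := by
  classical
  have hm : Measurable[mγ.comap T] φ := hφ.measurable
  have key : ∀ x y, T x = T y → φ x = φ y := by
    intro x y hxy
    obtain ⟨D, -, hD⟩ := hm (measurableSet_singleton (φ x))
    have hx : x ∈ T ⁻¹' D := by rw [hD]; exact rfl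
    have hy : y ∈ T ⁻¹' D := by simpa [Set.mem_preimage, hxy] using hx
    rw [hD] at hy
    exact (hy : φ y = φ x).symm
  refine ⟨fun y => if h : ∃ x, T x = y then φ h.choose else 0, ?_⟩
  funext x
  have hex : ∃ z, T z = T x := ⟨x, rfl⟩
  simp only [Function.comp_apply, dif_pos hex]
  exact (key _ _ hex.choose_spec).symm

lemma aux_perm (S S' : Finset ℕ) (h : S'.card = S.card) :
    ∃ π : Equiv.Perm ℕ, (∀ n, n ∉ S ∪ S' → π n = n) ∧
      ∃ e : {x // x ∈ S'} ≃ {x // x ∈ S}, ∀ j : {x // x ∈ S'}, π (j : ℕ) = (e j : ℕ) := by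
  classical
  set C : Finset ℕ := S ∪ S' with hC
  have hSC : ∀ {x : ℕ}, x ∈ S → x ∈ C := fun hx => Finset.mem_union_left _ hx
  have hS'C : ∀ {x : ℕ}, x ∈ S' → x ∈ C := fun hx => Finset.mem_union_right _ hx
  have e0 : {x // x ∈ S'} ≃ {x // x ∈ S} :=
    Finset.equivOfCardEq h
  let eS' : {c : {x // x ∈ C} // (c : ℕ) ∈ S'} ≃ {x // x ∈ S'} :=
    Equiv.subtypeSubtypeEquivSubtype (fun hx => hS'C hx)
  let eS : {c : {x // x ∈ C} // (c : ℕ) ∈ S} ≃ {x // x ∈ S} :=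
    Equiv.subtypeSubtypeEquivSubtype (fun hx => hSC hx)
  let e'' : {c : {x // x ∈ C} // (c : ℕ) ∈ S'} ≃ {c : {x // x ∈ C} // (c : ℕ) ∈ S} :=
    (eS'.trans e0).trans eS.symm
  let σC : Equiv.Perm {x // x ∈ C} := e''.extendSubtype
  let π : Equiv.Perm ℕ := σC.extendDomain (Equiv.refl _)
  refine ⟨π, fun n hn => Equiv.Perm.extendDomain_apply_not_subtype _ _ hn, e0, ?_⟩
  rintro ⟨j, hj⟩
  have hjC : j ∈ C := hS'C hj
  have h1 : π j = ((σC ⟨j, hjC⟩ : {x // x ∈ C}) : ℕ) := by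
    rw [Equiv.Perm.extendDomain_apply_subtype _ _ hjC]; rfl
  rw [h1]
  have h2 : σC ⟨j, hjC⟩ = (e'' ⟨⟨j, hjC⟩, hj⟩ : {x // x ∈ C}) :=
    Equiv.extendSubtype_apply_of_mem e'' ⟨j, hjC⟩ hj
  rw [h2]
  show ((eS.symm (e0 (eS' ⟨⟨j, hjC⟩, hj⟩)) : {c : {x // x ∈ C} // (c : ℕ) ∈ S}) : {x // x ∈ C}) = (e0 ⟨j, hj⟩ : ℕ)
  have h3 : eS' ⟨⟨j, hjC⟩, hj⟩ = ⟨j, hj⟩ := by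
    apply Subtype.ext; rfl
  rw [h3]
  rcases e0 ⟨j, hj⟩ with ⟨y, hy⟩
  rfl

/-- The σ-algebra generated by `(Y_j)_{j ∈ S}`. -/
def mSig {α Ω : Type*} [MeasurableSpace Ω] (Y : ℕ → α → Ω) (S : Finset ℕ) :
    MeasurableSpace α :=
  MeasurableSpace.comap (fun x => fun j : {j // j ∈ S} => Y (j : ℕ) x) MeasurableSpace.pi

lemma aux_transfer {α : Type*} [mα : MeasurableSpace α] (μ : Measure α) [IsProbabilityMeasure μ]
    {Ω : Type*} [Fintype Ω] [MeasurableSpace Ω] [MeasurableSingletonClass Ω]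
    (Y : ℕ → α → Ω) (hY : ∀ n, Measurable (Y n))
    (hfix : ∀ π : Equiv.Perm ℕ, {n : ℕ | π n ≠ n}.Finite → π 1 = 1 →
      Measure.map (fun x => fun n => Y (π n) x) μ = Measure.map (fun x => fun n => Y n x) μ)
    (a : Ω) (S S' : Finset ℕ) (hS : 1 ∉ S) (hS' : 1 ∉ S') (hcard : S'.card = S.card) :
    ∫ x, ((Y 1 ⁻¹' {a}).indicator (fun _ => (1:ℝ)) x) *
        (μ[(Y 1 ⁻¹' {a}).indicator (fun _ => (1:ℝ)) | mSig Y S]) x ∂μ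
      = ∫ x, ((Y 1 ⁻¹' {a}).indicator (fun _ => (1:ℝ)) x) *
        (μ[(Y 1 ⁻¹' {a}).indicator (fun _ => (1:ℝ)) | mSig Y S']) x ∂μ := by
  classical
  set φ : Ω → ℝ := ({a} : Set Ω).indicator (fun _ => (1:ℝ)) with hφdef
  set f : α → ℝ := (Y 1 ⁻¹' {a}).indicator (fun _ => (1:ℝ)) with hfdef
  have hφmeas : Measurable φ := measurable_const.indicator (measurableSet_singleton a)
  have hfφ : ∀ x, f x = φ (Y 1 x) := by
    intro x
    by_cases h : Y 1 x = a
    · simp [hfdef, hφdef, Set.indicator_of_mem, h]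
    · simp [hfdef, hφdef, Set.indicator_of_notMem, h]
  have hfmeas : Measurable f := measurable_const.indicator ((hY 1) (measurableSet_singleton a))
  have hfint : Integrable f μ := (integrable_const (1:ℝ)).indicator ((hY 1) (measurableSet_singleton a))
  -- the permutation
  obtain ⟨π, hπsupp, e, hπe⟩ := aux_perm S S' hcard
  have hπfin : {n : ℕ | π n ≠ n}.Finite := by
    refine Set.Finite.subset (S ∪ S').finite_toSet ?_
    intro n hn
    by_contra hnot
    exact hn (hπsupp n (by simpa using hnot))
  have hπ1 : π 1 = 1 := hπsupp 1 (by simp [hS, hS'])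
  have hmap := hfix π hπfin hπ1
  -- the maps
  set TS : α → ({j // j ∈ S} → Ω) := fun x => fun j => Y (j : ℕ) x with hTS
  set TS' : α → ({j // j ∈ S'} → Ω) := fun x => fun j => Y (j : ℕ) x with hTS'
  set Ye : α → ({j // j ∈ S'} → Ω) := fun x => fun j => Y ((e j : ℕ)) x with hYe
  have hTSmeas : Measurable TS := measurable_pi_lambda _ fun j => hY _
  have hTS'meas : Measurable TS' := measurable_pi_lambda _ fun j => hY _
  have hYemeas : Measurable Ye := measurable_pi_lambda _ fun j => hY _
  set J1 : α → Ω × ({j // j ∈ S'} → Ω) := fun x => (Y 1 x, TS' x) with hJ1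
  set J2 : α → Ω × ({j // j ∈ S'} → Ω) := fun x => (Y 1 x, Ye x) with hJ2
  have hJ1meas : Measurable J1 := (hY 1).prodMk hTS'meas
  have hJ2meas : Measurable J2 := (hY 1).prodMk hYemeas
  -- equality of joint laws
  have hJ : Measure.map J2 μ = Measure.map J1 μ := by
    have hproj : Measurable (fun z : ℕ → Ω => (z 1, fun j : {j // j ∈ S'} => z (j : ℕ))) :=
      (measurable_pi_apply 1).prodMk (measurable_pi_lambda _ fun j => measurable_pi_apply _)
    have hseq : Measurable (fun x => fun n => Y n x : α → ℕ → Ω) :=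
      measurable_pi_lambda _ fun n => hY n
    have hseqπ : Measurable (fun x => fun n => Y (π n) x : α → ℕ → Ω) :=
      measurable_pi_lambda _ fun n => hY (π n)
    have h1 := congrArg (Measure.map (fun z : ℕ → Ω => (z 1, fun j : {j // j ∈ S'} => z (j : ℕ)))) hmap
    rw [Measure.map_map hproj hseqπ, Measure.map_map hproj hseq] at h1
    have h2 : (fun z : ℕ → Ω => (z 1, fun j : {j // j ∈ S'} => z (j : ℕ)))
        ∘ (fun x => fun n => Y (π n) x) = J2 := by
      funext x
      have hco : (fun j : {j // j ∈ S'} => Y (π (j : ℕ)) x) = fun j => Y ((e j : ℕ)) x :=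
        funext fun j => by rw [hπe j]
      simp only [Function.comp_apply, hJ2, hπ1, hco]
      rfl
    have h3 : (fun z : ℕ → Ω => (z 1, fun j : {j // j ∈ S'} => z (j : ℕ)))
        ∘ (fun x => fun n => Y n x) = J1 := rfl
    rw [h2, h3] at h1
    exact h1
  -- generic transfer of integrals
  have ITrans : ∀ Ψ : Ω × ({j // j ∈ S'} → Ω) → ℝ, Measurable Ψ →
      ∫ x, Ψ (J2 x) ∂μ = ∫ x, Ψ (J1 x) ∂μ := by
    intro Ψ hΨ
    rw [← integral_map hJ2meas.aemeasurable hΨ.aestronglyMeasurable,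
      ← integral_map hJ1meas.aemeasurable hΨ.aestronglyMeasurable, hJ]
  -- factor the conditional expectation on the S side
  have hVSM : StronglyMeasurable[mSig Y S] (μ[f | mSig Y S]) := stronglyMeasurable_condExp
  obtain ⟨g, hg⟩ := aux_factor TS hVSM
  have hgmeas : Measurable g := fun s _ => aux_allMeasurable _
  set g' : ({j // j ∈ S'} → Ω) → ℝ := fun v => g (fun i => v (e.symm i)) with hg'def
  have hg'meas : Measurable g' := fun s _ => aux_allMeasurable _
  have hkey : ∀ x, g' (Ye x) = (μ[f | mSig Y S]) x := by
    intro x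
    have : (fun i : {j // j ∈ S} => Ye x (e.symm i)) = TS x := by
      funext i
      simp only [hYe, hTS]
      rw [e.apply_symm_apply]
    simp only [hg'def, this, hg]
    rfl
  have hmS : mSig Y S ≤ mα := measurable_iff_comap_le.mp hTSmeas
  have hmS' : mSig Y S' ≤ mα := measurable_iff_comap_le.mp hTS'meas
  haveI : SigmaFinite (μ.trim hmS) := by infer_instance
  haveI : SigmaFinite (μ.trim hmS') := by infer_instance
  -- set-integral to indicator conversion
  have indmul : ∀ (t : Set α) (_ : MeasurableSet t) (h : α → ℝ) (ind : α → ℝ),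
      (∀ x, ind x = t.indicator (fun _ => (1:ℝ)) x) →
      ∫ x in t, h x ∂μ = ∫ x, h x * ind x ∂μ := by
    intro t ht h ind hind
    rw [← integral_indicator ht]
    congr 1
    funext x
    by_cases hx : x ∈ t
    · simp [Set.indicator_of_mem hx, hind x]
    · simp [Set.indicator_of_notMem hx, hind x]
  -- the candidate g' ∘ TS' is the conditional expectation on the S' side
  have hg'cond : (fun x => g' (TS' x)) =ᵐ[μ] μ[f | mSig Y S'] := by
    refine ae_eq_condExp_of_forall_setIntegral_eq hmS' hfint ?_ ?_ ?_
    · -- integrability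
      intro s _ _
      refine Integrable.integrableOn ?_
      have hmain : Integrable (fun x => g' (Ye x)) μ := by
        have : (fun x => g' (Ye x)) = μ[f | mSig Y S] := funext hkey
        rw [this]; exact integrable_condExp
      have h1 : Integrable g' (Measure.map Ye μ) :=
        (integrable_map_measure hg'meas.aestronglyMeasurable hYemeas.aemeasurable).mpr hmain
      have h2 : Measure.map Ye μ = Measure.map TS' μ := by
        have := congrArg (Measure.map (Prod.snd : Ω × ({j // j ∈ S'} → Ω) → _)) hJ
        rwa [Measure.map_map measurable_snd hJ2meas, Measure.map_map measurable_snd hJ1meas] at this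
      rw [h2] at h1
      exact (integrable_map_measure hg'meas.aestronglyMeasurable hTS'meas.aemeasurable).mp h1
    · -- set integrals agree
      intro s hs _
      obtain ⟨D, hD, rfl⟩ := MeasurableSpace.measurableSet_comap.mp hs
      have hDall : MeasurableSet D := aux_allMeasurable D
      have hb1 : ∫ x in TS' ⁻¹' D, g' (TS' x) ∂μ
          = ∫ x, (fun p : Ω × ({j // j ∈ S'} → Ω) => D.indicator g' p.2) (J1 x) ∂μ := by
        rw [indmul (TS' ⁻¹' D) (hTS'meas hDall) _ (fun x => D.indicator (fun _ => (1:ℝ)) (TS' x)) (fun x => ?_)]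
        · congr 1
          funext x
          by_cases hx : TS' x ∈ D
          · simp [Set.indicator_of_mem hx, hJ1]
          · simp [Set.indicator_of_notMem hx, hJ1]
        · by_cases hx : TS' x ∈ D
          · simp [Set.indicator_of_mem, hx]
          · simp [Set.indicator_of_notMem, hx]
      have hDmS : MeasurableSet[mSig Y S] (Ye ⁻¹' D) :=
        MeasurableSpace.measurableSet_comap.mpr
          ⟨(fun v : {j // j ∈ S} → Ω => (fun i : {j // j ∈ S'} => v (e i))) ⁻¹' D,
            aux_allMeasurable _, rfl⟩
      have hΨa : Measurable (fun p : Ω × ({j // j ∈ S'} → Ω)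
          => g' p.2 * D.indicator (fun _ => (1:ℝ)) p.2) :=
        (hg'meas.comp measurable_snd).mul
          ((measurable_const.indicator hDall).comp measurable_snd)
      have hΨb : Measurable (fun p : Ω × ({j // j ∈ S'} → Ω)
          => φ p.1 * D.indicator (fun _ => (1:ℝ)) p.2) :=
        (hφmeas.comp measurable_fst).mul
          ((measurable_const.indicator hDall).comp measurable_snd)
      calc ∫ x in TS' ⁻¹' D, g' (TS' x) ∂μ
          = ∫ x, (fun p : Ω × ({j // j ∈ S'} → Ω)
              => g' p.2 * D.indicator (fun _ => (1:ℝ)) p.2) (J1 x) ∂μ :=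
            indmul _ (hTS'meas hDall) _ _ (fun x => rfl)
        _ = ∫ x, (fun p : Ω × ({j // j ∈ S'} → Ω)
              => g' p.2 * D.indicator (fun _ => (1:ℝ)) p.2) (J2 x) ∂μ := (ITrans _ hΨa).symm
        _ = ∫ x in Ye ⁻¹' D, g' (Ye x) ∂μ :=
            (indmul _ (hYemeas hDall) _ _ (fun x => rfl)).symm
        _ = ∫ x in Ye ⁻¹' D, (μ[f | mSig Y S]) x ∂μ := by
            refine setIntegral_congr_ae (hmS _ hDmS) ?_
            exact Filter.Eventually.of_forall (fun x _ => hkey x)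
        _ = ∫ x in Ye ⁻¹' D, f x ∂μ := setIntegral_condExp hmS hfint hDmS
        _ = ∫ x, (fun p : Ω × ({j // j ∈ S'} → Ω)
              => φ p.1 * D.indicator (fun _ => (1:ℝ)) p.2) (J2 x) ∂μ :=
            indmul _ (hYemeas hDall) _ _ (fun x => rfl) |>.trans
              (by all_goals (congr 1 <;> (funext x; rw [hfφ x])))
        _ = ∫ x, (fun p : Ω × ({j // j ∈ S'} → Ω)
              => φ p.1 * D.indicator (fun _ => (1:ℝ)) p.2) (J1 x) ∂μ := ITrans _ hΨb
        _ = ∫ x in TS' ⁻¹' D, f x ∂μ := by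
            rw [indmul (TS' ⁻¹' D) (hTS'meas hDall) f
              (fun x => D.indicator (fun _ => (1:ℝ)) (TS' x)) (fun x => rfl)]
            all_goals (congr 1 <;> (funext x; rw [hfφ x]))
    · exact (hg'meas.comp
        (measurable_iff_comap_le.mpr le_rfl : Measurable[mSig Y S'] TS')).stronglyMeasurable.aestronglyMeasurable
  -- final chain
  have hΨg : Measurable (fun p : Ω × ({j // j ∈ S'} → Ω) => φ p.1 * g' p.2) :=
    (hφmeas.comp measurable_fst).mul (hg'meas.comp measurable_snd)
  calc ∫ x, f x * (μ[f | mSig Y S]) x ∂μ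
      = ∫ x, (fun p : Ω × ({j // j ∈ S'} → Ω) => φ p.1 * g' p.2) (J2 x) ∂μ := by
        all_goals (congr 1 <;> (funext x; rw [← hkey x, hfφ x]))
    _ = ∫ x, (fun p : Ω × ({j // j ∈ S'} → Ω) => φ p.1 * g' p.2) (J1 x) ∂μ := ITrans _ hΨg
    _ = ∫ x, f x * g' (TS' x) ∂μ := by
        all_goals (congr 1 <;> (funext x; rw [hfφ x]))
    _ = ∫ x, f x * (μ[f | mSig Y S']) x ∂μ := by
        refine integral_congr_ae ?_
        filter_upwards [hg'cond] with x hx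
        rw [hx]


section Pyth
variable {α : Type*} [mα : MeasurableSpace α] {μ : Measure α} [IsProbabilityMeasure μ]

lemma aux_bdd_condexp {m : MeasurableSpace α} {f : α → ℝ} (hbdd : ∀ x, |f x| ≤ 1) :
    ∀ᵐ x ∂μ, |(μ[f|m]) x| ≤ 1 := by
  have : ∀ᵐ x ∂μ, |f x| ≤ ((1 : ℝ≥0) : ℝ) := Filter.Eventually.of_forall (by simpa using hbdd)
  simpa using ae_bdd_condExp_of_ae_bdd this

lemma aux_pythagoras {G H : MeasurableSpace α} (hGH : G ≤ H) (hH : H ≤ mα)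
    {f : α → ℝ} (hf : Integrable f μ) (hfb : ∀ x, |f x| ≤ 1)
    (hEq : ∫ x, f x * (μ[f|H]) x ∂μ = ∫ x, f x * (μ[f|G]) x ∂μ) :
    μ[f|H] =ᵐ[μ] μ[f|G] := by
  have hG : G ≤ mα := hGH.trans hH
  set U := μ[f|G] with hUdef
  set V := μ[f|H] with hVdef
  have hUb : ∀ᵐ x ∂μ, |U x| ≤ 1 := @aux_bdd_condexp α mα μ _ G f hfb
  have hVb : ∀ᵐ x ∂μ, |V x| ≤ 1 := @aux_bdd_condexp α mα μ _ H f hfb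
  have hU_SM : StronglyMeasurable[G] U := stronglyMeasurable_condExp
  have hV_SM : StronglyMeasurable[H] V := stronglyMeasurable_condExp
  have hUm : AEStronglyMeasurable[mα] U μ := (hU_SM.mono hG).aestronglyMeasurable
  have hVm : AEStronglyMeasurable[mα] V μ := (hV_SM.mono hH).aestronglyMeasurable
  have hUi : Integrable U μ := integrable_condExp
  have hVi : Integrable V μ := integrable_condExp
  have hUb' : ∀ᵐ x ∂μ, ‖U x‖ ≤ 1 := by simpa [Real.norm_eq_abs] using hUb
  have hVb' : ∀ᵐ x ∂μ, ‖V x‖ ≤ 1 := by simpa [Real.norm_eq_abs] using hVb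
  -- pull-out identities
  have pull : ∀ (m : MeasurableSpace α) (hm : m ≤ mα) (g : α → ℝ),
      StronglyMeasurable[m] g → (∀ᵐ x ∂μ, ‖g x‖ ≤ 1) →
      ∫ x, g x * f x ∂μ = ∫ x, g x * (μ[f|m]) x ∂μ := by
    intro m hm g hgm hgb
    haveI : SigmaFinite (μ.trim hm) := by infer_instance
    have h1 : μ[g * f|m] =ᵐ[μ] g * μ[f|m] :=
      condExp_stronglyMeasurable_mul_of_bound hm hgm hf 1 hgb
    have hgf : Integrable (g * f) μ := hf.bdd_mul (hgm.mono hm).aestronglyMeasurable hgb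
    calc ∫ x, g x * f x ∂μ = ∫ x, (μ[g * f|m]) x ∂μ := (integral_condExp hm).symm
      _ = ∫ x, (g * μ[f|m]) x ∂μ := integral_congr_ae h1
      _ = ∫ x, g x * (μ[f|m]) x ∂μ := rfl
  have hVV : ∫ x, V x * f x ∂μ = ∫ x, V x * V x ∂μ := pull H hH V hV_SM hVb'
  have hUU : ∫ x, U x * f x ∂μ = ∫ x, U x * U x ∂μ := pull G hG U hU_SM hUb'
  have hUV : ∫ x, U x * f x ∂μ = ∫ x, U x * V x ∂μ := pull H hH U (hU_SM.mono hGH) hUb'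
  have hcomm : ∀ (g : α → ℝ), ∫ x, f x * g x ∂μ = ∫ x, g x * f x ∂μ := by
    intro g; simp_rw [mul_comm]
  -- all four integrals equal
  have c1 : ∫ x, V x * V x ∂μ = ∫ x, f x * V x ∂μ := by rw [hcomm V, hVV]
  have c2 : ∫ x, U x * U x ∂μ = ∫ x, f x * U x ∂μ := by rw [hcomm U, hUU]
  have c3 : ∫ x, U x * V x ∂μ = ∫ x, f x * U x ∂μ := by rw [hcomm U, hUV]
  -- integrability of products
  have iVV : Integrable (fun x => V x * V x) μ := hVi.bdd_mul hVm hVb'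
  have iUU : Integrable (fun x => U x * U x) μ := hUi.bdd_mul hUm hUb'
  have iUV : Integrable (fun x => U x * V x) μ := hVi.bdd_mul hUm hUb'
  have iVU : Integrable (fun x => V x * U x) μ := hUi.bdd_mul hVm hVb'
  have hVU : ∫ x, V x * U x ∂μ = ∫ x, U x * V x ∂μ := by simp_rw [mul_comm]
  have expand : ∫ x, (V x - U x) * (V x - U x) ∂μ
      = ∫ x, V x * V x ∂μ - ∫ x, V x * U x ∂μ - ∫ x, U x * V x ∂μ + ∫ x, U x * U x ∂μ := by
    have : (fun x => (V x - U x) * (V x - U x))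
        = fun x => V x * V x - V x * U x - U x * V x + U x * U x := by
      funext x; ring
    have iA : Integrable (fun x => V x * V x - V x * U x) μ := iVV.sub iVU
    have iB : Integrable (fun x => V x * V x - V x * U x - U x * V x) μ := iA.sub iUV
    rw [this, integral_add iB iUU, integral_sub iA iUV, integral_sub iVV iVU]
  have hzero : ∫ x, (V x - U x) * (V x - U x) ∂μ = 0 := by
    rw [expand, c1, c2, c3, hVU, c3, hEq]; ring
  have hnn : 0 ≤ fun x => (V x - U x) * (V x - U x) := fun x => mul_self_nonneg _
  have hint : Integrable (fun x => (V x - U x) * (V x - U x)) μ := by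
    have hI : Integrable (fun x => V x * V x - V x * U x - U x * V x + U x * U x) μ :=
      (((iVV.sub iVU).sub iUV)).add iUU
    have heq : (fun x => (V x - U x) * (V x - U x))
        = fun x => V x * V x - V x * U x - U x * V x + U x * U x := by funext x; ring
    rwa [heq]
  have := (integral_eq_zero_iff_of_nonneg hnn hint).1 hzero
  filter_upwards [this] with x hx
  have : (V x - U x) * (V x - U x) = 0 := hx
  have := mul_self_eq_zero.1 this
  linarith [sub_eq_zero.1 this]

end Pyth

lemma aux_DCT {α : Type*} [mα : MeasurableSpace α] {μ : Measure α} [IsProbabilityMeasure μ]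
    {f : α → ℝ} (hfmeas : Measurable f) (hfb1 : ∀ x, |f x| ≤ 1)
    (ms : ℕ → MeasurableSpace α) (mt : MeasurableSpace α) (hms : ∀ n, ms n ≤ mα)
    (hconv : ∀ᵐ x ∂μ, Filter.Tendsto (fun n => (μ[f|ms n]) x) Filter.atTop
      (nhds ((μ[f|mt]) x))) :
    Filter.Tendsto (fun n => ∫ x, f x * (μ[f|ms n]) x ∂μ) Filter.atTop
      (nhds (∫ x, f x * (μ[f|mt]) x ∂μ)) := by
  refine tendsto_integral_of_dominated_convergence (fun _ => (1:ℝ)) ?_ (integrable_const 1) ?_ ?_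
  · intro n
    have h1 : AEStronglyMeasurable[mα] (μ[f|ms n]) μ :=
      ((stronglyMeasurable_condExp (m := ms n) (μ := μ) (f := f)).mono (hms n)).aestronglyMeasurable
    exact hfmeas.aestronglyMeasurable.mul h1
  · intro n
    filter_upwards [@aux_bdd_condexp α mα μ _ (ms n) f hfb1] with x hx
    rw [Real.norm_eq_abs, abs_mul]
    nlinarith [hfb1 x, abs_nonneg (f x), abs_nonneg ((μ[f|ms n]) x)]
  · filter_upwards [hconv] with x hx
    exact hx.const_mul (f x)



section AuxMain

variable {α : Type*} [mα : MeasurableSpace α] {μ : Measure α} [IsProbabilityMeasure μ]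
variable {Ω : Type*} [Fintype Ω] [MeasurableSpace Ω] [MeasurableSingletonClass Ω]

/-- comap of a pi σ-algebra is the iSup of the coordinate comaps. -/
lemma aux_comap_pi {ι : Type*} (g : ι → α → Ω) :
    MeasurableSpace.comap (fun x => fun i : ι => g i x) MeasurableSpace.pi
      = ⨆ i, MeasurableSpace.comap (g i) ‹MeasurableSpace Ω› := by
  have : (MeasurableSpace.pi : MeasurableSpace (ι → Ω))
      = ⨆ i, MeasurableSpace.comap (fun b : ι → Ω => b i) ‹MeasurableSpace Ω› := rfl
  rw [this, MeasurableSpace.comap_iSup]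
  exact iSup_congr fun i => MeasurableSpace.comap_comp

end AuxMain

section MainDefs

variable {α : Type*} [mα : MeasurableSpace α]
variable {Ω : Type*} [Fintype Ω] [MeasurableSpace Ω] [MeasurableSingletonClass Ω]
variable (Y : ℕ → α → Ω)

lemma mSig_eq (S : Finset ℕ) :
    mSig Y S = ⨆ j : {j // j ∈ S}, MeasurableSpace.comap (Y (j : ℕ)) ‹MeasurableSpace Ω› :=
  aux_comap_pi _

lemma mSig_mono {S T : Finset ℕ} (h : S ⊆ T) : mSig Y S ≤ mSig Y T := by
  rw [mSig_eq, mSig_eq]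
  exact iSup_le fun j => le_iSup_of_le ⟨(j : ℕ), h j.2⟩ le_rfl

lemma comap_le_mSig {j : ℕ} {S : Finset ℕ} (hj : j ∈ S) :
    MeasurableSpace.comap (Y j) ‹MeasurableSpace Ω› ≤ mSig Y S := by
  rw [mSig_eq]
  exact le_iSup_of_le ⟨j, hj⟩ le_rfl

lemma mSig_le (hY : ∀ n, Measurable (Y n)) (S : Finset ℕ) : mSig Y S ≤ mα :=
  measurable_iff_comap_le.mp (measurable_pi_lambda _ fun j => hY _)

end MainDefs


/-- The σ-algebra generated by the variables `(Y_j)` for `j ∉ F ∪ {1}`. -/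
def tailSigma {α Ω : Type*} [MeasurableSpace Ω] (Y : ℕ → α → Ω) (F : Finset ℕ) :
    MeasurableSpace α :=
  MeasurableSpace.comap
    (fun x => fun j : {j : ℕ // j ∉ F ∧ j ≠ 1} => Y (j : ℕ) x) MeasurableSpace.pi

/-- de Finetti-type conditional independence: if `(Y_n)_{n≥1}` is an exchangeable
sequence of random variables with values in a finite set `Ω`, whose joint law is
invariant under all finite permutations of `ℕ` (in particular those fixing `1`), and
`F` is a finite set of indices with `1 ∉ F`, then `Y_1` and `(Y_j)_{j∈F}` are
conditionally independent given `(Y_j)_{j∉F∪{1}}`. -/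
theorem stmt16 {α : Type*} [MeasurableSpace α] (μ : Measure α) [IsProbabilityMeasure μ]
    {Ω : Type*} [Fintype Ω] [MeasurableSpace Ω] [MeasurableSingletonClass Ω]
    (Y : ℕ → α → Ω) (hY : ∀ n, Measurable (Y n))
    -- exchangeability: invariance of the joint law under all finite permutations
    (hexch : ∀ π : Equiv.Perm ℕ, {n : ℕ | π n ≠ n}.Finite →
      Measure.map (fun x => fun n => Y (π n) x) μ =
        Measure.map (fun x => fun n => Y n x) μ)
    -- invariance under all finite permutations fixing `1`
    (hfix : ∀ π : Equiv.Perm ℕ, {n : ℕ | π n ≠ n}.Finite → π 1 = 1 →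
      Measure.map (fun x => fun n => Y (π n) x) μ =
        Measure.map (fun x => fun n => Y n x) μ)
    (F : Finset ℕ) (hF : 1 ∉ F) :
    ∀ (a : Ω) (w : F → Ω),
      MeasureTheory.condExp (tailSigma Y F) μ
        (Set.indicator {x | Y 1 x = a ∧ ∀ j : F, Y (j : ℕ) x = w j} (fun _ => (1 : ℝ)))
        =ᵐ[μ]
      (fun x =>
        (MeasureTheory.condExp (tailSigma Y F) μ
          (Set.indicator {x | Y 1 x = a} (fun _ => (1 : ℝ))) x) *
        (MeasureTheory.condExp (tailSigma Y F) μ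
          (Set.indicator {x | ∀ j : F, Y (j : ℕ) x = w j} (fun _ => (1 : ℝ))) x)) := by
  intro a w
  classical
  set f : α → ℝ := Set.indicator {x | Y 1 x = a} (fun _ => (1 : ℝ)) with hfdef
  set b : α → ℝ := Set.indicator {x | ∀ j : F, Y (j : ℕ) x = w j} (fun _ => (1 : ℝ)) with hbdef
  have hfset : MeasurableSet {x | Y 1 x = a} := hY 1 (measurableSet_singleton a)
  have hbset0 : MeasurableSet {x | ∀ j : F, Y (j : ℕ) x = w j} := by
    have : {x | ∀ j : F, Y (j : ℕ) x = w j}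
        = ⋂ j : {j // j ∈ F}, (Y (j : ℕ)) ⁻¹' {w j} := by
      ext x; simp [Set.mem_iInter]
    rw [this]
    exact MeasurableSet.iInter fun j => hY _ (measurableSet_singleton _)
  have hfint : Integrable f μ := (integrable_const (1:ℝ)).indicator hfset
  have hbint : Integrable b μ := (integrable_const (1:ℝ)).indicator hbset0
  have hfb1 : ∀ x, |f x| ≤ 1 := by
    intro x
    rw [← Real.norm_eq_abs]
    exact le_trans (norm_indicator_le_norm_self _ _) (by simp)
  have hbb1 : ∀ x, ‖b x‖ ≤ 1 := by
    intro x
    exact le_trans (norm_indicator_le_norm_self _ _) (by simp)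
  -- the filtrations
  set A : ℕ → Finset ℕ := fun n => Finset.range n \ insert 1 F with hAdef
  set B : ℕ → Finset ℕ := fun n => Finset.range n \ {1} with hBdef
  have hAB : ∀ n, A n ⊆ B n := fun n =>
    Finset.sdiff_subset_sdiff (Finset.Subset.refl _) (Finset.singleton_subset_iff.mpr (Finset.mem_insert_self 1 F))
  have h1A : ∀ n, 1 ∉ A n := fun n hn => (Finset.mem_sdiff.mp hn).2 (Finset.mem_insert_self 1 F)
  have h1B : ∀ n, 1 ∉ B n := fun n hn => (Finset.mem_sdiff.mp hn).2 (Finset.mem_singleton_self 1)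
  have hAmono : Monotone A := by
    intro m n hmn
    exact Finset.sdiff_subset_sdiff (Finset.range_subset_range.mpr hmn) (Finset.Subset.refl _)
  have hBmono : Monotone B := by
    intro m n hmn
    exact Finset.sdiff_subset_sdiff (Finset.range_subset_range.mpr hmn) (Finset.Subset.refl _)
  let ℱA : Filtration ℕ ‹MeasurableSpace α› :=
    ⟨fun n => mSig Y (A n), fun _ _ h => mSig_mono Y (hAmono h), fun n => mSig_le Y hY (A n)⟩
  let ℱB : Filtration ℕ ‹MeasurableSpace α› :=
    ⟨fun n => mSig Y (B n), fun _ _ h => mSig_mono Y (hBmono h), fun n => mSig_le Y hY (B n)⟩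
  -- identification of the suprema
  have hGsup : (⨆ n, mSig Y (A n)) = tailSigma Y F := by
    have htail : tailSigma Y F
        = ⨆ j : {j : ℕ // j ∉ F ∧ j ≠ 1}, MeasurableSpace.comap (Y (j : ℕ)) ‹MeasurableSpace Ω› :=
      aux_comap_pi _
    rw [htail]
    apply le_antisymm
    · refine iSup_le fun n => ?_
      rw [mSig_eq]
      refine iSup_le fun j => ?_
      have hj := Finset.mem_sdiff.mp j.2
      have hj2 : (j : ℕ) ∉ F ∧ (j : ℕ) ≠ 1 := by
        constructor
        · exact fun h => hj.2 (Finset.mem_insert_of_mem h)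
        · exact fun h => hj.2 (h ▸ Finset.mem_insert_self 1 F)
      exact le_iSup_of_le ⟨(j : ℕ), hj2⟩ le_rfl
    · refine iSup_le fun j => ?_
      refine le_iSup_of_le ((j : ℕ) + 1) ?_
      refine le_trans ?_ (le_of_eq rfl)
      refine le_trans (le_of_eq rfl) (comap_le_mSig Y ?_)
      refine Finset.mem_sdiff.mpr ⟨Finset.mem_range.mpr (Nat.lt_succ_self _), ?_⟩
      intro hmem
      rcases Finset.mem_insert.mp hmem with h | h
      · exact j.2.2 h
      · exact j.2.1 h
  have hGle : tailSigma Y F ≤ ‹MeasurableSpace α› := by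
    rw [← hGsup]
    exact iSup_le fun n => mSig_le Y hY (A n)
  have hHle : (⨆ n, mSig Y (B n)) ≤ ‹MeasurableSpace α› :=
    iSup_le fun n => mSig_le Y hY (B n)
  have hGH : tailSigma Y F ≤ ⨆ n, mSig Y (B n) := by
    rw [← hGsup]
    exact iSup_mono fun n => mSig_mono Y (hAB n)
  haveI : SigmaFinite (μ.trim hGle) := by infer_instance
  haveI : SigmaFinite (μ.trim hHle) := by infer_instance
  -- b is measurable w.r.t. the big σ-algebra
  have hbsetH : MeasurableSet[⨆ n, mSig Y (B n)] {x | ∀ j : F, Y (j : ℕ) x = w j} := by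
    have : {x | ∀ j : F, Y (j : ℕ) x = w j}
        = ⋂ j : {j // j ∈ F}, (Y (j : ℕ)) ⁻¹' {w j} := by
      ext x; simp [Set.mem_iInter]
    rw [this]
    refine MeasurableSet.iInter fun j => ?_
    have hle : MeasurableSpace.comap (Y (j : ℕ)) ‹MeasurableSpace Ω› ≤ ⨆ n, mSig Y (B n) := by
      refine le_trans (comap_le_mSig Y (j := (j : ℕ)) (S := B ((j : ℕ) + 2)) ?_) (le_iSup (fun n => mSig Y (B n)) ((j : ℕ) + 2))
      refine Finset.mem_sdiff.mpr ⟨Finset.mem_range.mpr (by omega), ?_⟩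
      rw [Finset.mem_singleton]
      intro h
      exact hF (h ▸ j.2)
    exact hle _ (MeasurableSpace.measurableSet_comap.mpr ⟨{w j}, measurableSet_singleton _, rfl⟩)
  have hbSM : StronglyMeasurable[⨆ n, mSig Y (B n)] b :=
    stronglyMeasurable_const.indicator hbsetH
  have hfmeas : Measurable f := measurable_const.indicator hfset
  have hfp : f = (Y 1 ⁻¹' {a}).indicator (fun _ => (1:ℝ)) := rfl
  -- Lévy upward convergence, A side
  have hsupA : (⨆ n, ℱA n) = tailSigma Y F := hGsup
  have hLevyA : ∀ᵐ x ∂μ, Filter.Tendsto (fun n => (μ[f|mSig Y (A n)]) x)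
      Filter.atTop (nhds ((μ[f|tailSigma Y F]) x)) := by
    have h := tendsto_ae_condExp (μ := μ) (ℱ := ℱA) f
    rw [hsupA] at h
    exact h
  have hLevyB : ∀ᵐ x ∂μ, Filter.Tendsto (fun n => (μ[f|mSig Y (B n)]) x)
      Filter.atTop (nhds ((μ[f|⨆ n, mSig Y (B n)]) x)) := by
    have h := tendsto_ae_condExp (μ := μ) (ℱ := ℱB) f
    exact h
  have hconvA := aux_DCT hfmeas hfb1 (fun n => mSig Y (A n)) (tailSigma Y F)
    (fun n => mSig_le Y hY _) hLevyA
  have hconvB := aux_DCT hfmeas hfb1 (fun n => mSig Y (B n)) (⨆ n, mSig Y (B n))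
    (fun n => mSig_le Y hY _) hLevyB
  -- cardinality bookkeeping
  set c := F.card with hc
  set N := (insert 1 F).sup id + 2 with hN
  have hsub : ∀ n, N ≤ n → insert 1 F ⊆ Finset.range n := by
    intro n hn j hj
    have := Finset.le_sup (f := id) hj
    exact Finset.mem_range.mpr (by simp only [id] at this; omega)
  have hcards : ∀ n, N ≤ n → (B n).card = (A (n + c)).card := by
    intro n hn
    have h1 : (A (n + c)).card = (n + c) - (F.card + 1) := by
      rw [hAdef]
      rw [Finset.card_sdiff_of_subset (hsub _ (by omega)), Finset.card_range,
        Finset.card_insert_of_notMem hF]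
    have h2 : (B n).card = n - 1 := by
      rw [hBdef]
      rw [Finset.card_sdiff_of_subset (Finset.singleton_subset_iff.mpr
        (hsub n hn (Finset.mem_insert_self 1 F))), Finset.card_range, Finset.card_singleton]
    rw [h1, h2, hc]
    omega
  have hEqSeq : ∀ n, N ≤ n → ∫ x, f x * (μ[f|mSig Y (B n)]) x ∂μ
      = ∫ x, f x * (μ[f|mSig Y (A (n + c))]) x ∂μ := by
    intro n hn
    have h := aux_transfer μ Y hY hfix a (A (n + c)) (B n) (h1A _) (h1B _) (hcards n hn)
    rw [hfp]
    exact h.symm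
  -- identify the two limits
  have hTA : Filter.Tendsto (fun n => ∫ x, f x * (μ[f|mSig Y (A (n + c))]) x ∂μ)
      Filter.atTop (nhds (∫ x, f x * (μ[f|tailSigma Y F]) x ∂μ)) :=
    hconvA.comp (Filter.tendsto_add_atTop_nat c)
  have hTB' : Filter.Tendsto (fun n => ∫ x, f x * (μ[f|mSig Y (B n)]) x ∂μ)
      Filter.atTop (nhds (∫ x, f x * (μ[f|tailSigma Y F]) x ∂μ)) := by
    refine hTA.congr' ?_
    filter_upwards [Filter.eventually_atTop.mpr ⟨N, fun n hn => hn⟩] with n hn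
    exact (hEqSeq n hn).symm
  have hEqLim : ∫ x, f x * (μ[f|⨆ n, mSig Y (B n)]) x ∂μ
      = ∫ x, f x * (μ[f|tailSigma Y F]) x ∂μ :=
    tendsto_nhds_unique hconvB hTB'
  -- the key conditional independence identity
  have key : μ[f|⨆ n, mSig Y (B n)] =ᵐ[μ] μ[f|tailSigma Y F] :=
    aux_pythagoras hGH hHle hfint hfb1 hEqLim
  -- assembling: Step A
  have hprod : Set.indicator {x | Y 1 x = a ∧ ∀ j : F, Y (j : ℕ) x = w j} (fun _ => (1:ℝ))
      = fun x => b x * f x := by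
    funext x
    rw [hfdef, hbdef]
    by_cases h1 : Y 1 x = a <;> by_cases h2 : ∀ j : F, Y (j : ℕ) x = w j <;>
      simp [Set.indicator_apply, Set.mem_setOf_eq, h1, h2]
  have hVb : ∀ᵐ x ∂μ, ‖(μ[f|tailSigma Y F]) x‖ ≤ 1 := by
    filter_upwards [aux_bdd_condexp (μ := μ) (m := tailSigma Y F) hfb1] with x hx
    rwa [Real.norm_eq_abs]
  have s1 : μ[(fun x => b x * f x)|tailSigma Y F]
      =ᵐ[μ] μ[μ[(fun x => b x * f x)|⨆ n, mSig Y (B n)]|tailSigma Y F] :=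
    (condExp_condExp_of_le hGH hHle).symm
  have s2 : μ[(fun x => b x * f x)|⨆ n, mSig Y (B n)]
      =ᵐ[μ] fun x => b x * (μ[f|⨆ n, mSig Y (B n)]) x := by
    have h := condExp_stronglyMeasurable_mul_of_bound hHle hbSM hfint 1
      (Filter.Eventually.of_forall hbb1)
    exact h
  have s3 : (fun x => b x * (μ[f|⨆ n, mSig Y (B n)]) x)
      =ᵐ[μ] fun x => b x * (μ[f|tailSigma Y F]) x := by
    filter_upwards [key] with x hx
    rw [hx]
  have s4 : μ[μ[(fun x => b x * f x)|⨆ n, mSig Y (B n)]|tailSigma Y F]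
      =ᵐ[μ] μ[(fun x => b x * (μ[f|tailSigma Y F]) x)|tailSigma Y F] :=
    condExp_congr_ae (s2.trans s3)
  have hcomm : (fun x => b x * (μ[f|tailSigma Y F]) x)
      = fun x => (μ[f|tailSigma Y F]) x * b x := by
    funext x; ring
  have s5 : μ[(fun x => (μ[f|tailSigma Y F]) x * b x)|tailSigma Y F]
      =ᵐ[μ] fun x => (μ[f|tailSigma Y F]) x * (μ[b|tailSigma Y F]) x := by
    have h := condExp_stronglyMeasurable_mul_of_bound hGle
      (stronglyMeasurable_condExp (f := f) (m := tailSigma Y F) (μ := μ)) hbint 1 hVb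
    exact h
  rw [hprod]
  refine s1.trans (s4.trans ?_)
  rw [hcomm]
  exact s5
end
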